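/- arXiv:2010.00712 — 5 statements merged into one kernel-verified Lean document; each statement's English description precedes it below -/
import Mathlib

section
/- Let n be a power of 2, let H ∈ ℝ^{n×n} be the normalized Walsh–Hadamard matrix, and let D ∈ ℝ^{n×n} be a random diagonal matrix whose diagonal entries are i.i.d. uniform on {−1,1}. Then for every x ∈ ℝ^n and every λ > 0, one has P( ‖H·D·x‖_∞ ≤ λ·‖x‖₂ ) ≥ 1 − 2n·e^{−nλ²/2}. -/
open MeasureTheory ProbabilityTheory Real
open scoped NNReal ENNReal

noncomputable section

/-- Matrix–vector product for matrices represented as functions. -/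
def matVec {a b : ℕ} (M : Fin a → Fin b → ℝ) (x : Fin b → ℝ) : Fin a → ℝ :=
  fun i => ∑ j, M i j * x j

/-- Matrix–matrix product for matrices represented as functions. -/
def matMul {a b c : ℕ} (M : Fin a → Fin b → ℝ) (N : Fin b → Fin c → ℝ) :
    Fin a → Fin c → ℝ :=
  fun i k => ∑ j, M i j * N j k

/-- Powers of a square matrix represented as a function. -/
def matPow {a : ℕ} (M : Fin a → Fin a → ℝ) : ℕ → (Fin a → Fin a → ℝ)
  | 0 => fun i j => if i = j then 1 else 0
  | k + 1 => matMul (matPow M k) M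

/-- The ℓ¹ norm on ℝ^k. -/
def l1Norm {k : ℕ} (x : Fin k → ℝ) : ℝ := ∑ i, |x i|

/-- The ℓ² norm on ℝ^k. -/
def l2Norm {k : ℕ} (x : Fin k → ℝ) : ℝ := Real.sqrt (∑ i, (x i) ^ 2)

/-- The ℓ^∞ norm on ℝ^k. -/
def lInfNorm {k : ℕ} (x : Fin k → ℝ) : ℝ := ⨆ i, |x i|

/-- The (∞,1) operator norm: `max_{x ≠ 0} ‖Kx‖₁ / ‖x‖_∞`. -/
def opNormInfOne {a b : ℕ} (K : Fin a → Fin b → ℝ) : ℝ :=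
  sSup {t : ℝ | ∃ x : Fin b → ℝ, x ≠ 0 ∧ t = l1Norm (matVec K x) / lInfNorm x}

/-- The (∞,∞) operator norm: `max_{x ≠ 0} ‖Kx‖_∞ / ‖x‖_∞`. -/
def opNormInfInf {a b : ℕ} (K : Fin a → Fin b → ℝ) : ℝ :=
  sSup {t : ℝ | ∃ x : Fin b → ℝ, x ≠ 0 ∧ t = lInfNorm (matVec K x) / lInfNorm x}

/-- The law `(1-s)·δ₀ + s·N(0,1/s)` of a single entry of a sparse Gaussian random matrix. -/
def sparseGaussianLaw (s : ℝ) : Measure ℝ :=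
  (Real.toNNReal (1 - s)) • Measure.dirac (0 : ℝ) +
    (Real.toNNReal s) • gaussianReal 0 (Real.toNNReal s)⁻¹

/-- The law of a sparse Gaussian random matrix with i.i.d. entries of law
`(1-s)·δ₀ + s·N(0,1/s)`. -/
def sparseGaussianMatrixLaw (m n : ℕ) (s : ℝ) : Measure (Fin m → Fin n → ℝ) :=
  Measure.pi fun _ : Fin m => Measure.pi fun _ : Fin n => sparseGaussianLaw s

/-- The uniform law on `{-1, 1}`. -/
def signLaw : Measure ℝ :=
  ((2 : ℝ≥0)⁻¹) • Measure.dirac (1 : ℝ) + ((2 : ℝ≥0)⁻¹) • Measure.dirac (-1 : ℝ)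

/-- The law of a vector of i.i.d. uniform ±1 signs. -/
def signVecLaw (n : ℕ) : Measure (Fin n → ℝ) := Measure.pi fun _ : Fin n => signLaw

/-- Bitwise dot product of the binary representations of two natural numbers. -/
def bitDot (i j : ℕ) : ℕ :=
  ∑ k ∈ Finset.range i.size, if i.testBit k && j.testBit k then 1 else 0

/-- The normalized Walsh–Hadamard matrix `H_{ij} = n^{-1/2} (-1)^{⟨i,j⟩}` (0-indexed). -/
def walshHadamard (n : ℕ) : Fin n → Fin n → ℝ :=
  fun i j => (Real.sqrt n)⁻¹ * (-1 : ℝ) ^ bitDot (i : ℕ) (j : ℕ)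

/-- The fast Johnson–Lindenstrauss transform `Φ = A·H·D` where `D = diag d`. -/
def fjlt {m n : ℕ} (A : Fin m → Fin n → ℝ) (d : Fin n → ℝ) : Fin m → Fin n → ℝ :=
  matMul A (matMul (walshHadamard n) (fun i j => if i = j then d i else 0))

/-- The coefficient of `z^j` in `(1 + z + ⋯ + z^{lt-1})^r`. -/
def condCoeff (r lt : ℕ) (j : ℕ) : ℝ :=
  ((∑ i ∈ Finset.range lt, (Polynomial.X : Polynomial ℝ) ^ i) ^ r).coeff j

/-- The condensation vector `v ∈ ℝ^λ` of order `r`. -/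
def condVec (r lt lam : ℕ) : Fin lam → ℝ := fun j => condCoeff r lt (j : ℕ)

/-- The block matrix `I_p ⊗ v ∈ ℝ^{p × (λp)}` built from a row vector `v ∈ ℝ^λ`. -/
def kronRow {lam p : ℕ} (v : Fin lam → ℝ) (i : Fin p) (c : Fin (lam * p)) : ℝ :=
  if (c : ℕ) / lam = (i : ℕ) then
    v ⟨(c : ℕ) % lam, Nat.mod_lt _ (Nat.pos_of_ne_zero fun h => absurd c.isLt (by simp [h]))⟩
  else 0

/-- The condensation operator `V = I_p ⊗ v`. -/
def condOp (r lt lam p : ℕ) : Fin p → Fin (lam * p) → ℝ :=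
  kronRow (condVec r lt lam)

/-- The normalized condensation operator `Ṽ = (√(π/2)/(p‖v‖₂)) V`. -/
def normCondOp (r lt lam p : ℕ) : Fin p → Fin (lam * p) → ℝ :=
  fun i c => (Real.sqrt (Real.pi / 2) / ((p : ℝ) * l2Norm (condVec r lt lam))) *
    condOp r lt lam p i c

/-- The first-order difference matrix `P`. -/
def diffMat (m : ℕ) : Fin m → Fin m → ℝ :=
  fun i j => if (i : ℕ) = (j : ℕ) then 1 else if (i : ℕ) = (j : ℕ) + 1 then -1 else 0

/-- Pairing `(i, k) ↦ i·λ + k` as an index into `Fin (λ·p)`. -/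
def finPair {p lam : ℕ} (i : Fin p) (k : Fin lam) : Fin (lam * p) :=
  ⟨(i : ℕ) * lam + (k : ℕ), by
    calc (i : ℕ) * lam + (k : ℕ) < (i : ℕ) * lam + lam := Nat.add_lt_add_left k.isLt _
      _ = ((i : ℕ) + 1) * lam := by ring
      _ ≤ p * lam := Nat.mul_le_mul_right lam i.isLt
      _ = lam * p := Nat.mul_comm p lam⟩

/-- The Kronecker product `v^T ⊗ y ∈ ℝ^{λn}`, whose `(k·n + j)`-th entry is `v_k · y_j`. -/
def kronVec {lam n : ℕ} (v : Fin lam → ℝ) (y : Fin n → ℝ) : Fin (lam * n) → ℝ :=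
  fun c =>
    have hn : 0 < n := Nat.pos_of_ne_zero fun h => absurd c.isLt (by simp [h])
    v ⟨(c : ℕ) / n, (Nat.div_lt_iff_lt_mul hn).mpr c.isLt⟩ * y ⟨(c : ℕ) % n, Nat.mod_lt _ hn⟩

/-- Reshaping of an `(λp) × n` matrix into a `p × (λn)` matrix, with
`B_{i, k·n + j} = A_{i·λ + k, j}`. -/
def reshapeMat {lam p n : ℕ} (A : Fin (lam * p) → Fin n → ℝ) :
    Fin p → Fin (lam * n) → ℝ :=
  fun i c =>
    have hn : 0 < n := Nat.pos_of_ne_zero fun h => absurd c.isLt (by simp [h])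
    A (finPair i ⟨(c : ℕ) / n, (Nat.div_lt_iff_lt_mul hn).mpr c.isLt⟩)
      ⟨(c : ℕ) % n, Nat.mod_lt _ hn⟩

/-- The support `n_j = σ·j² + 1` (zero-indexed `j`, i.e. `σ(j-1)²+1` one-indexed). -/
def sigmaDeltaIdx (σ : ℕ) {r : ℕ} (j : Fin r) : ℕ := σ * (j : ℕ) ^ 2 + 1

/-- The filter coefficient `d_j = ∏_{i ≠ j} n_i / (n_i - n_j)`. -/
def sigmaDeltaCoef (σ : ℕ) {r : ℕ} (j : Fin r) : ℝ :=
  ∏ i ∈ Finset.univ.erase j,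
    (sigmaDeltaIdx σ i : ℝ) / ((sigmaDeltaIdx σ i : ℝ) - (sigmaDeltaIdx σ j : ℝ))

end


noncomputable section
open Classical Finset


def sgn (s : Bool) : ℝ := if s then 1 else -1

lemma expSum_le {n : ℕ} (a : Fin n → ℝ) (t : ℝ) :
    ∑ s : Fin n → Bool, Real.exp (t * ∑ j, a j * sgn (s j)) ≤
      2 ^ n * Real.exp (t ^ 2 * (∑ j, (a j) ^ 2) / 2) := by
  have h1 : ∀ s : Fin n → Bool, Real.exp (t * ∑ j, a j * sgn (s j)) =
      ∏ j, Real.exp (t * a j * sgn (s j)) := by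
    intro s
    rw [← Real.exp_sum, Finset.mul_sum]
    ring_nf
  simp only [h1]
  rw [← Fintype.prod_sum fun j (b : Bool) => Real.exp (t * a j * sgn b)]
  have h3 : ∀ j : Fin n, ∑ b : Bool, Real.exp (t * a j * sgn b) ≤ 2 * Real.exp ((t * a j) ^ 2 / 2) := by
    intro j
    have hc := Real.cosh_le_exp_half_sq (t * a j)
    rw [Real.cosh_eq] at hc
    have h4 : ∑ b : Bool, Real.exp (t * a j * sgn b)
        = Real.exp (t * a j) + Real.exp (-(t * a j)) := by
      simp [sgn, Fintype.sum_bool]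
    rw [h4]
    nlinarith [hc]
  calc ∏ j, ∑ b : Bool, Real.exp (t * a j * sgn b)
      ≤ ∏ j : Fin n, 2 * Real.exp ((t * a j) ^ 2 / 2) := by
        apply Finset.prod_le_prod
        · intro j _; positivity
        · intro j _; exact h3 j
    _ = 2 ^ n * Real.exp (∑ j, (t * a j) ^ 2 / 2) := by
        rw [Finset.prod_mul_distrib, Finset.prod_const, ← Real.exp_sum]
        simp
    _ = 2 ^ n * Real.exp (t ^ 2 * (∑ j, (a j) ^ 2) / 2) := by
        congr 2
        rw [Finset.mul_sum, Finset.sum_div]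
        exact Finset.sum_congr rfl fun j _ => by ring

lemma chernoff_discrete {n : ℕ} (a : Fin n → ℝ) (c : ℝ) (hc : 0 < c)
    (hA : 0 < ∑ j, (a j) ^ 2) :
    ∑ s : Fin n → Bool, (if c < |∑ j, a j * sgn (s j)| then (1 : ℝ) else 0) ≤
      2 ^ n * (2 * Real.exp (-(c ^ 2) / (2 * ∑ j, (a j) ^ 2))) := by
  set A := ∑ j, (a j) ^ 2 with hAdef
  set t := c / A with htdef
  have ht : 0 < t := div_pos hc hA
  have key : ∀ s : Fin n → Bool, (if c < |∑ j, a j * sgn (s j)| then (1 : ℝ) else 0) ≤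
      Real.exp (-(t * c)) * (Real.exp (t * ∑ j, a j * sgn (s j)) +
        Real.exp ((-t) * ∑ j, a j * sgn (s j))) := by
    intro s
    set S := ∑ j, a j * sgn (s j) with hS
    by_cases h : c < |S|
    · rw [if_pos h]
      have h2 : Real.exp (t * c) ≤ Real.exp (t * S) + Real.exp ((-t) * S) := by
        rcases lt_abs.mp h with h' | h'
        · have h5 : Real.exp (t * c) < Real.exp (t * S) :=
            Real.exp_lt_exp.mpr (by nlinarith)
          nlinarith [Real.exp_pos ((-t) * S)]
        · have h5 : Real.exp (t * c) < Real.exp ((-t) * S) :=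
            Real.exp_lt_exp.mpr (by nlinarith)
          nlinarith [Real.exp_pos (t * S)]
      rw [Real.exp_neg, inv_mul_eq_div, le_div_iff₀ (Real.exp_pos _), one_mul]
      exact h2
    · rw [if_neg h]; positivity
  calc ∑ s : Fin n → Bool, (if c < |∑ j, a j * sgn (s j)| then (1 : ℝ) else 0)
      ≤ ∑ s : Fin n → Bool, Real.exp (-(t * c)) * (Real.exp (t * ∑ j, a j * sgn (s j)) +
          Real.exp ((-t) * ∑ j, a j * sgn (s j))) :=
        Finset.sum_le_sum fun s _ => key s
    _ = Real.exp (-(t * c)) * ((∑ s : Fin n → Bool, Real.exp (t * ∑ j, a j * sgn (s j))) +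
          ∑ s : Fin n → Bool, Real.exp ((-t) * ∑ j, a j * sgn (s j))) := by
        rw [← Finset.mul_sum, Finset.sum_add_distrib]
    _ ≤ Real.exp (-(t * c)) * ((2 ^ n * Real.exp (t ^ 2 * A / 2)) +
          2 ^ n * Real.exp ((-t) ^ 2 * A / 2)) := by
        apply mul_le_mul_of_nonneg_left _ (le_of_lt (Real.exp_pos _))
        exact add_le_add (expSum_le a t) (expSum_le a (-t))
    _ = 2 ^ n * (2 * Real.exp (t ^ 2 * A / 2 - t * c)) := by
        rw [neg_sq, Real.exp_sub, Real.exp_neg, div_eq_mul_inv]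
        ring
    _ = 2 ^ n * (2 * Real.exp (-(c ^ 2) / (2 * A))) := by
        congr 3
        rw [htdef]
        field_simp
        ring


noncomputable def epsv {n : ℕ} (s : Fin n → Bool) : Fin n → ℝ := fun j => sgn (s j)

instance : IsProbabilityMeasure signLaw := by
  constructor
  rw [signLaw, Measure.add_apply, Measure.smul_apply, Measure.smul_apply]
  simp [ENNReal.smul_def, ENNReal.inv_two_add_inv_two]

lemma signVecLaw_eq (n : ℕ) :
    signVecLaw n = ((2 : ℝ≥0∞) ^ n)⁻¹ • ∑ s : Fin n → Bool, Measure.dirac (epsv s) := by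
  classical
  unfold signVecLaw
  apply Measure.pi_eq
  intro t ht
  rw [Measure.smul_apply, Measure.finset_sum_apply, smul_eq_mul]
  have h1 : ∀ s : Fin n → Bool, Measure.dirac (epsv s) (Set.pi Set.univ t) =
      ∏ j, (if sgn (s j) ∈ t j then (1 : ℝ≥0∞) else 0) := by
    intro s
    rw [Measure.dirac_apply, Finset.prod_boole, Set.indicator_apply]
    by_cases h : epsv s ∈ Set.pi Set.univ t
    · rw [if_pos h, if_pos]
      · rfl
      · intro j _
        exact h j (Set.mem_univ j)
    · rw [if_neg h, if_neg]
      intro hall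
      exact h fun j _ => hall j (Finset.mem_univ j)
  simp only [h1]
  rw [← Fintype.prod_sum fun j (b : Bool) => if sgn b ∈ t j then (1 : ℝ≥0∞) else 0]
  have h2 : ∀ j, signLaw (t j) =
      (2 : ℝ≥0∞)⁻¹ * ∑ b : Bool, (if sgn b ∈ t j then (1 : ℝ≥0∞) else 0) := by
    intro j
    rw [signLaw, Measure.add_apply, Measure.smul_apply, Measure.smul_apply,
      Measure.dirac_apply, Measure.dirac_apply, Fintype.sum_bool]
    simp [sgn, ENNReal.smul_def, Set.indicator_apply, mul_add]
  simp only [h2]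
  rw [Finset.prod_mul_distrib, Finset.prod_const, ← ENNReal.inv_pow, Finset.card_univ,
    Fintype.card_fin]

end

/-- ℓ^∞ concentration for the randomized Walsh–Hadamard transform `H·D`. -/
theorem hadamard_flattening (n : ℕ) (hn : ∃ k : ℕ, n = 2 ^ k)
    (Ω : Type) [MeasurableSpace Ω] (P : Measure Ω) [IsProbabilityMeasure P]
    (d : Ω → Fin n → ℝ) (hd : Measurable d) (hlaw : P.map d = signVecLaw n) :
    ∀ (x : Fin n → ℝ) (lam : ℝ), 0 < lam →
      ENNReal.ofReal (1 - 2 * (n : ℝ) * Real.exp (-(n : ℝ) * lam ^ 2 / 2)) ≤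
        P {ω | lInfNorm (matVec (walshHadamard n) (fun j => d ω j * x j)) ≤
          lam * l2Norm x} := by
  classical
  obtain ⟨k, hk⟩ := hn
  have hnpos : 0 < n := hk ▸ pow_pos (by norm_num : (0:ℕ) < 2) k
  have hnR : (0 : ℝ) < n := Nat.cast_pos.mpr hnpos
  haveI : Nonempty (Fin n) := Fin.pos_iff_nonempty.mp hnpos
  intro x lam hlam
  set β : ℝ := 2 * (n : ℝ) * Real.exp (-(n : ℝ) * lam ^ 2 / 2) with hβ
  have hβ0 : 0 ≤ β := by positivity
  by_cases hx : x = 0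
  · subst hx
    have hset : {ω | lInfNorm (matVec (walshHadamard n) fun j => d ω j * (0 : Fin n → ℝ) j) ≤
        lam * l2Norm (0 : Fin n → ℝ)} = Set.univ := by
      ext ω
      simp only [Set.mem_setOf_eq, Set.mem_univ, iff_true]
      have h1 : (matVec (walshHadamard n) fun j => d ω j * (0 : Fin n → ℝ) j) = fun _ => 0 := by
        funext i
        simp [matVec]
      rw [h1, lInfNorm, l2Norm]
      simp [ciSup_const]
    rw [hset, measure_univ]
    calc ENNReal.ofReal (1 - β) ≤ ENNReal.ofReal 1 :=
          ENNReal.ofReal_le_ofReal (by linarith)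
      _ = 1 := ENNReal.ofReal_one
  · -- main case
    have hx2 : 0 < ∑ j, x j ^ 2 := by
      obtain ⟨j0, hj0⟩ := Function.ne_iff.mp hx
      have hj0' : x j0 ≠ 0 := by simpa using hj0
      exact Finset.sum_pos' (fun j _ => sq_nonneg _) ⟨j0, Finset.mem_univ _, by positivity⟩
    set c : ℝ := lam * l2Norm x with hcdef
    have hc : 0 < c := mul_pos hlam (Real.sqrt_pos.mpr hx2)
    set a : Fin n → Fin n → ℝ := fun i j => walshHadamard n i j * x j with hadef
    have hasq : ∀ i, (∑ j, (a i j) ^ 2) = (n : ℝ)⁻¹ * ∑ j, x j ^ 2 := by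
      intro i
      rw [Finset.mul_sum]
      refine Finset.sum_congr rfl fun j _ => ?_
      have h1 : walshHadamard n i j ^ 2 = (n : ℝ)⁻¹ := by
        rw [walshHadamard, mul_pow, ← pow_mul, mul_comm (bitDot (i:ℕ) (j:ℕ)) 2, pow_mul,
          neg_one_sq, one_pow, mul_one, inv_pow, Real.sq_sqrt (le_of_lt hnR)]
      rw [hadef, mul_pow, h1]
    have hA : ∀ i, 0 < ∑ j, (a i j) ^ 2 := fun i => by
      rw [hasq i]; positivity
    have hexp : ∀ i, -(c ^ 2) / (2 * ∑ j, (a i j) ^ 2) = -(n : ℝ) * lam ^ 2 / 2 := by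
      intro i
      rw [hasq i, hcdef, mul_pow, l2Norm, Real.sq_sqrt hx2.le]
      have hT : (∑ j, x j ^ 2) ≠ 0 := ne_of_gt hx2
      field_simp
    -- the bad sets
    set A : Fin n → Set (Fin n → ℝ) := fun i => {v | |∑ j, a i j * v j| ≤ c} with hAdef
    have hAmeas : ∀ i, MeasurableSet (A i) := by
      intro i
      apply measurableSet_le _ measurable_const
      exact (Finset.measurable_sum Finset.univ fun j _ =>
        by fun_prop).abs
    have hmeasI : MeasurableSet (⋂ i, A i) := MeasurableSet.iInter fun i => hAmeas i
    have hseteq : {ω | lInfNorm (matVec (walshHadamard n) fun j => d ω j * x j) ≤ c} =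
        d ⁻¹' (⋂ i, A i) := by
      ext ω
      simp only [Set.mem_setOf_eq, Set.mem_preimage, Set.mem_iInter, hAdef, Set.mem_setOf_eq]
      have hco : ∀ i, matVec (walshHadamard n) (fun j => d ω j * x j) i =
          ∑ j, a i j * d ω j := by
        intro i
        exact Finset.sum_congr rfl fun j _ => by rw [hadef]; ring
      rw [lInfNorm]
      constructor
      · intro h i
        rw [← hco i]
        exact le_trans (le_ciSup (f := fun i => |matVec (walshHadamard n) (fun j => d ω j * x j) i|) (Set.Finite.bddAbove (Set.finite_range _)) i) h
      · intro h
        exact ciSup_le fun i => (hco i) ▸ h i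
    -- per-coordinate Chernoff bound
    have hper : ∀ i : Fin n, signVecLaw n (A i)ᶜ ≤
        ENNReal.ofReal (2 * Real.exp (-(n : ℝ) * lam ^ 2 / 2)) := by
      intro i
      rw [signVecLaw_eq n, Measure.smul_apply, Measure.finset_sum_apply, smul_eq_mul]
      have h1 : ∀ s : Fin n → Bool, Measure.dirac (epsv s) (A i)ᶜ =
          ENNReal.ofReal (if c < |∑ j, a i j * sgn (s j)| then (1 : ℝ) else 0) := by
        intro s
        rw [Measure.dirac_apply, Set.indicator_apply]
        have hm : epsv s ∈ (A i)ᶜ ↔ c < |∑ j, a i j * sgn (s j)| := by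
          simp only [Set.mem_compl_iff, hAdef, Set.mem_setOf_eq, not_le, epsv]
        by_cases h : c < |∑ j, a i j * sgn (s j)|
        · rw [if_pos (hm.mpr h), if_pos h]
          simp
        · rw [if_neg (fun hh => h (hm.mp hh)), if_neg h]
          simp
      simp only [h1]
      rw [← ENNReal.ofReal_sum_of_nonneg (fun s _ => by positivity)]
      have h2 : ((2 : ℝ≥0∞) ^ n)⁻¹ = ENNReal.ofReal (((2 : ℝ) ^ n)⁻¹) := by
        rw [ENNReal.ofReal_inv_of_pos (by positivity), ENNReal.ofReal_pow (by norm_num)]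
        norm_num
      rw [h2, ← ENNReal.ofReal_mul (by positivity)]
      apply ENNReal.ofReal_le_ofReal
      have h3 := chernoff_discrete (a i) c hc (hA i)
      rw [hexp i] at h3
      calc ((2:ℝ) ^ n)⁻¹ * ∑ s : Fin n → Bool, (if c < |∑ j, a i j * sgn (s j)| then (1:ℝ) else 0)
          ≤ ((2:ℝ) ^ n)⁻¹ * (2 ^ n * (2 * Real.exp (-(n : ℝ) * lam ^ 2 / 2))) := by
            apply mul_le_mul_of_nonneg_left h3 (by positivity)
        _ = 2 * Real.exp (-(n : ℝ) * lam ^ 2 / 2) := by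
            field_simp
    -- union bound
    have hunion : signVecLaw n (⋂ i, A i)ᶜ ≤ ENNReal.ofReal β := by
      rw [Set.compl_iInter]
      calc signVecLaw n (⋃ i, (A i)ᶜ) ≤ ∑' i : Fin n, signVecLaw n (A i)ᶜ := measure_iUnion_le _
        _ = ∑ i : Fin n, signVecLaw n (A i)ᶜ := tsum_fintype _
        _ ≤ ∑ i : Fin n, ENNReal.ofReal (2 * Real.exp (-(n : ℝ) * lam ^ 2 / 2)) :=
            Finset.sum_le_sum fun i _ => hper i
        _ = ENNReal.ofReal β := by
            rw [Finset.sum_const, Finset.card_univ, Fintype.card_fin, nsmul_eq_mul, hβ,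
              ← ENNReal.ofReal_natCast n, ← ENNReal.ofReal_mul (by positivity)]
            congr 1
            ring
    -- conclude
    haveI : IsProbabilityMeasure (signVecLaw n) := by
      rw [signVecLaw]
      infer_instance
    have hGmeas : signVecLaw n (⋂ i, A i) = 1 - signVecLaw n (⋂ i, A i)ᶜ := by
      rw [prob_compl_eq_one_sub hmeasI]
      exact (ENNReal.sub_sub_cancel ENNReal.one_ne_top prob_le_one).symm
    rw [hseteq, ← Measure.map_apply hd hmeasI, hlaw, hGmeas]
    calc ENNReal.ofReal (1 - β) = 1 - ENNReal.ofReal β := by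
          rw [ENNReal.ofReal_sub 1 hβ0, ENNReal.ofReal_one]
      _ ≤ 1 - signVecLaw n (⋂ i, A i)ᶜ := tsub_le_tsub_left hunion 1
end

section
/- Let r, λ̃, p be positive integers, λ = r·λ̃ − r + 1, m = λ·p. Let v ∈ ℝ^λ be the condensation vector of order r, Ṽ = (√(π/2)/(p‖v‖₂))·(I_p ⊗ v) ∈ ℝ^{p×m} the normalized condensation operator, and P ∈ ℝ^{m×m} the first-order difference matrix. Then ‖Ṽ·P^r‖_{∞,1} ≤ √(π/2)·(8r)^{r+1}·λ^{−r+1/2}. -/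
open MeasureTheory ProbabilityTheory Real
open scoped NNReal ENNReal

section AuxProofs
open Polynomial Finset

-- coefficient of (X-1)^r
lemma myCoeff_X_sub_one_pow (r b : ℕ) (hb : b ≤ r) :
    ((X - 1 : Polynomial ℝ) ^ r).coeff b = (-1 : ℝ) ^ (r - b) * r.choose b := by
  have h : (X - 1 : Polynomial ℝ) = X + (-1) := by ring
  rw [h, add_pow]
  rw [finset_sum_coeff]
  have hterm : ∀ j ∈ range (r + 1),
      ((X : Polynomial ℝ) ^ j * (-1) ^ (r - j) * (r.choose j : Polynomial ℝ)).coeff b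
        = if b = j then (-1 : ℝ) ^ (r - j) * r.choose j else 0 := by
    intro j _
    have : ((X : Polynomial ℝ) ^ j * (-1) ^ (r - j) * (r.choose j : Polynomial ℝ))
        = Polynomial.C ((-1 : ℝ) ^ (r - j) * (r.choose j : ℝ)) * X ^ j := by
      rw [map_mul, ← Polynomial.C_eq_natCast, map_pow, map_neg, map_one]
      ring
    rw [this, Polynomial.coeff_C_mul, Polynomial.coeff_X_pow]
    split <;> simp
  rw [Finset.sum_congr rfl hterm, Finset.sum_ite_eq (range (r+1)) b]
  simp [Nat.lt_succ_of_le hb]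

lemma myCoeff_X_sub_one_pow_zero (r b : ℕ) (hb : r < b) :
    ((X - 1 : Polynomial ℝ) ^ r).coeff b = 0 := by
  apply Polynomial.coeff_eq_zero_of_natDegree_lt
  calc ((X - 1 : Polynomial ℝ) ^ r).natDegree ≤ r * (X - 1 : Polynomial ℝ).natDegree :=
        Polynomial.natDegree_pow_le
    _ ≤ r * 1 := by
        apply Nat.mul_le_mul_left
        have : (X - 1 : Polynomial ℝ) = X - Polynomial.C 1 := by simp
        rw [this, Polynomial.natDegree_X_sub_C]
    _ = r := by ring
  omega
open Polynomial Finset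

lemma myMulIdent (r lt : ℕ) :
    ((∑ i ∈ range lt, (X : Polynomial ℝ) ^ i) ^ r) * (X - 1 : Polynomial ℝ) ^ r
      = (-1 : Polynomial ℝ) ^ r * (1 - X ^ lt) ^ r := by
  rw [← mul_pow, ← mul_pow, geom_sum_mul]
  congr 1
  ring

lemma myNatDegree_f_le (r lt : ℕ) (hlt : 0 < lt) :
    ((∑ i ∈ range lt, (X : Polynomial ℝ) ^ i) ^ r).natDegree ≤ r * (lt - 1) := by
  calc ((∑ i ∈ range lt, (X : Polynomial ℝ) ^ i) ^ r).natDegree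
      ≤ r * (∑ i ∈ range lt, (X : Polynomial ℝ) ^ i).natDegree := Polynomial.natDegree_pow_le
    _ ≤ r * (lt - 1) := by
        apply Nat.mul_le_mul_left
        apply Polynomial.natDegree_sum_le_of_forall_le
        intro i hi
        simp only [Polynomial.natDegree_X_pow]
        have := Finset.mem_range.mp hi
        omega

-- coefficient bound for g = (1 - X^lt)^r
lemma myGCoeffBound (r lt n : ℕ) :
    |((1 - (X : Polynomial ℝ) ^ lt) ^ r).coeff n|
      ≤ ∑ j ∈ range (r + 1), (r.choose j : ℝ) * (if n = j * lt then 1 else 0) := by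
  have h : (1 - (X : Polynomial ℝ) ^ lt) = (-(X ^ lt)) + 1 := by ring
  rw [h, add_pow]
  rw [finset_sum_coeff]
  have hterm : ∀ j ∈ range (r + 1),
      ((-((X : Polynomial ℝ) ^ lt)) ^ j * 1 ^ (r - j) * (r.choose j : Polynomial ℝ)).coeff n
        = ((-1 : ℝ) ^ j * r.choose j) * (if n = j * lt then 1 else 0) := by
    intro j _
    have : ((-((X : Polynomial ℝ) ^ lt)) ^ j * 1 ^ (r - j) * (r.choose j : Polynomial ℝ))
        = Polynomial.C ((-1 : ℝ) ^ j * (r.choose j : ℝ)) * X ^ (j * lt) := by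
      rw [← Polynomial.C_eq_natCast, map_mul, map_pow, map_neg, map_one, neg_pow,
        ← pow_mul, Nat.mul_comm lt j]
      ring
    rw [this, Polynomial.coeff_C_mul, Polynomial.coeff_X_pow]
  rw [Finset.sum_congr rfl hterm]
  refine (Finset.abs_sum_le_sum_abs _ _).trans ?_
  apply Finset.sum_le_sum
  intro j _
  rw [abs_mul, abs_mul]
  gcongr
  · simp [abs_mul, abs_pow]
  · split <;> simp

lemma myGCoeffSumBound (r lt N : ℕ) :
    ∑ n ∈ range N, |((1 - (X : Polynomial ℝ) ^ lt) ^ r).coeff n| ≤ 2 ^ r := by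
  calc ∑ n ∈ range N, |((1 - (X : Polynomial ℝ) ^ lt) ^ r).coeff n|
      ≤ ∑ n ∈ range N, ∑ j ∈ range (r+1), (r.choose j : ℝ) * (if n = j * lt then 1 else 0) :=
        Finset.sum_le_sum fun n _ => myGCoeffBound r lt n
    _ = ∑ j ∈ range (r+1), ∑ n ∈ range N, (r.choose j : ℝ) * (if n = j * lt then 1 else 0) :=
        Finset.sum_comm
    _ ≤ ∑ j ∈ range (r+1), (r.choose j : ℝ) := by
        apply Finset.sum_le_sum
        intro j _
        rw [← Finset.mul_sum]
        have : ∑ n ∈ range N, (if n = j * lt then (1:ℝ) else 0)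
            = if j * lt ∈ range N then (1:ℝ) else 0 := Finset.sum_ite_eq' (range N) (j*lt) _
        rw [this]
        have h1 : (if j * lt ∈ range N then (1:ℝ) else 0) ≤ 1 := by split <;> norm_num
        exact mul_le_of_le_one_right (Nat.cast_nonneg _) h1
    _ = 2 ^ r := by rw [← Nat.cast_sum, Nat.sum_range_choose]; push_cast; ring


lemma myFCoeffZero (r lt lam k : ℕ) (hlt : 0 < lt) (h : r * (lt - 1) < lam) (hk : lam ≤ k) :
    ((∑ i ∈ range lt, (X : Polynomial ℝ) ^ i) ^ r).coeff k = 0 := by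
  apply Polynomial.coeff_eq_zero_of_natDegree_lt
  exact lt_of_le_of_lt (myNatDegree_f_le r lt hlt) (lt_of_lt_of_le h hk)

lemma myMulCoeff (r lt n : ℕ) :
    (((∑ i ∈ range lt, (X : Polynomial ℝ) ^ i) ^ r) * (X - 1 : Polynomial ℝ) ^ r).coeff n
      = (-1 : ℝ) ^ r * ((1 - (X : Polynomial ℝ) ^ lt) ^ r).coeff n := by
  rw [myMulIdent]
  have h : ((-1 : Polynomial ℝ) ^ r * (1 - X ^ lt) ^ r)
      = Polynomial.C ((-1 : ℝ) ^ r) * (1 - X ^ lt) ^ r := by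
    rw [map_pow, map_neg, map_one]
  rw [h, Polynomial.coeff_C_mul]

lemma myKeyA (r lt lam c : ℕ) (hlt : 0 < lt) (h : r * (lt - 1) < lam) :
    ∑ k ∈ range lam, ((∑ i ∈ range lt, (X : Polynomial ℝ) ^ i) ^ r).coeff k *
        (if c ≤ k then (-1 : ℝ) ^ (k - c) * r.choose (k - c) else 0)
      = (-1 : ℝ) ^ r * ((1 - (X : Polynomial ℝ) ^ lt) ^ r).coeff (c + r) := by
  set f := (∑ i ∈ range lt, (X : Polynomial ℝ) ^ i) ^ r with hf
  set G : ℕ → ℝ := fun k =>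
    f.coeff k * (if c ≤ k then (-1 : ℝ) ^ (k - c) * r.choose (k - c) else 0) with hG
  rw [← myMulCoeff r lt (c + r), Polynomial.coeff_mul,
    Finset.Nat.sum_antidiagonal_eq_sum_range_succ_mk]
  have hpt : ∀ k ∈ range (c + r + 1), f.coeff k * ((X - 1 : Polynomial ℝ) ^ r).coeff (c + r - k)
      = G k := by
    intro k hk
    have hk' : k ≤ c + r := by simpa using Nat.lt_succ_iff.mp (Finset.mem_range.mp hk)
    rcases le_or_gt c k with hck | hck
    · rw [myCoeff_X_sub_one_pow r (c + r - k) (by omega)]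
      simp only [hG, if_pos hck]
      rw [show r - (c + r - k) = k - c by omega,
        show c + r - k = r - (k - c) by omega, Nat.choose_symm (by omega)]
    · rw [myCoeff_X_sub_one_pow_zero r (c + r - k) (by omega)]
      simp only [hG, if_neg (not_le.mpr hck), mul_zero]
  rw [Finset.sum_congr rfl hpt]
  have hsub1 : ∑ k ∈ range (c + r + 1), G k = ∑ k ∈ range (max lam (c + r + 1)), G k := by
    apply Finset.sum_subset (Finset.range_subset_range.mpr (le_max_right _ _))
    intro k _ hk
    have hk2 : c + r < k := by
      have := Finset.mem_range.not.mp hk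
      omega
    simp only [hG, if_pos (by omega : c ≤ k), Nat.choose_eq_zero_of_lt (by omega : r < k - c)]
    simp
  have hsub2 : ∑ k ∈ range lam, G k = ∑ k ∈ range (max lam (c + r + 1)), G k := by
    apply Finset.sum_subset (Finset.range_subset_range.mpr (le_max_left _ _))
    intro k _ hk
    have hk2 : lam ≤ k := by
      have := Finset.mem_range.not.mp hk
      omega
    simp only [hG, hf, myFCoeffZero r lt lam k hlt h hk2, zero_mul]
  rw [hsub2, ← hsub1]

lemma myKeyB (r lt lam e : ℕ) (hlt : 0 < lt) (h : r * (lt - 1) < lam) (he : e ≤ r) :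
    ∑ k ∈ range lam, ((∑ i ∈ range lt, (X : Polynomial ℝ) ^ i) ^ r).coeff k *
        ((-1 : ℝ) ^ (k + e) * r.choose (k + e))
      = (-1 : ℝ) ^ r * ((1 - (X : Polynomial ℝ) ^ lt) ^ r).coeff (r - e) := by
  set f := (∑ i ∈ range lt, (X : Polynomial ℝ) ^ i) ^ r with hf
  set G : ℕ → ℝ := fun k => f.coeff k * ((-1 : ℝ) ^ (k + e) * r.choose (k + e)) with hG
  rw [← myMulCoeff r lt (r - e), Polynomial.coeff_mul,
    Finset.Nat.sum_antidiagonal_eq_sum_range_succ_mk]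
  have hpt : ∀ k ∈ range (r - e + 1), f.coeff k * ((X - 1 : Polynomial ℝ) ^ r).coeff (r - e - k)
      = G k := by
    intro k hk
    have hk' : k ≤ r - e := by simpa using Nat.lt_succ_iff.mp (Finset.mem_range.mp hk)
    rw [myCoeff_X_sub_one_pow r (r - e - k) (by omega)]
    simp only [hG]
    rw [show r - (r - e - k) = k + e by omega,
      show r - e - k = r - (k + e) by omega, Nat.choose_symm (by omega)]
  rw [Finset.sum_congr rfl hpt]
  have hsub1 : ∑ k ∈ range (r - e + 1), G k = ∑ k ∈ range (max lam (r - e + 1)), G k := by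
    apply Finset.sum_subset (Finset.range_subset_range.mpr (le_max_right _ _))
    intro k _ hk
    have hk2 : r - e < k := by
      have := Finset.mem_range.not.mp hk
      omega
    simp only [hG, Nat.choose_eq_zero_of_lt (by omega : r < k + e)]
    simp
  have hsub2 : ∑ k ∈ range lam, G k = ∑ k ∈ range (max lam (r - e + 1)), G k := by
    apply Finset.sum_subset (Finset.range_subset_range.mpr (le_max_left _ _))
    intro k _ hk
    have hk2 : lam ≤ k := by
      have := Finset.mem_range.not.mp hk
      omega
    simp only [hG, hf, myFCoeffZero r lt lam k hlt h hk2, zero_mul]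
  rw [hsub2, ← hsub1]


lemma myMatPow_diff (m r : ℕ) (j c : Fin m) :
    matPow (diffMat m) r j c =
      if (c : ℕ) ≤ (j : ℕ) then
        (-1 : ℝ) ^ ((j : ℕ) - (c : ℕ)) * (r.choose ((j : ℕ) - (c : ℕ))) else 0 := by
  induction r generalizing c with
  | zero =>
    show (if j = c then (1:ℝ) else 0) = _
    by_cases h : (c : ℕ) ≤ (j : ℕ)
    · rw [if_pos h]
      by_cases h2 : (j : ℕ) = (c : ℕ)
      · rw [if_pos (Fin.ext h2), show (j:ℕ) - (c:ℕ) = 0 by omega]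
        simp
      · rw [if_neg (fun hh => h2 (congrArg Fin.val hh)),
          Nat.choose_eq_zero_of_lt (by omega : 0 < (j:ℕ) - (c:ℕ))]
        simp
    · rw [if_neg h, if_neg (fun hh => h (le_of_eq (congrArg Fin.val hh).symm))]
  | succ r ih =>
    show ∑ b, matPow (diffMat m) r j b * diffMat m b c = _
    have hsplit : ∀ b : Fin m, matPow (diffMat m) r j b * diffMat m b c
        = (if b = c then matPow (diffMat m) r j b else 0)
          + (if (b : ℕ) = (c : ℕ) + 1 then -matPow (diffMat m) r j b else 0) := by
      intro b
      show matPow (diffMat m) r j b *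
          (if (b : ℕ) = (c : ℕ) then 1 else if (b : ℕ) = (c : ℕ) + 1 then -1 else 0) = _
      by_cases h1 : (b : ℕ) = (c : ℕ)
      · rw [if_pos h1, if_pos (Fin.ext h1), if_neg (by omega), mul_one, add_zero]
      · rw [if_neg h1, if_neg (fun hh => h1 (congrArg Fin.val hh)), zero_add]
        by_cases h2 : (b : ℕ) = (c : ℕ) + 1
        · rw [if_pos h2, if_pos h2]; ring
        · rw [if_neg h2, if_neg h2, mul_zero]
    rw [Finset.sum_congr rfl (fun b _ => hsplit b), Finset.sum_add_distrib]
    rw [Finset.sum_ite_eq' Finset.univ c (fun b => matPow (diffMat m) r j b),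
      if_pos (Finset.mem_univ c)]
    have hsecond : (∑ b : Fin m, if (b : ℕ) = (c : ℕ) + 1 then -matPow (diffMat m) r j b else 0)
        = if h : (c : ℕ) + 1 < m then -matPow (diffMat m) r j ⟨(c : ℕ) + 1, h⟩ else 0 := by
      split
      case isTrue h =>
        have he : ∀ b : Fin m, ((b : ℕ) = (c : ℕ) + 1) = (b = (⟨(c : ℕ) + 1, h⟩ : Fin m)) := by
          intro b
          apply propext
          exact ⟨fun hh => Fin.ext hh, fun hh => by rw [hh]⟩
        simp_rw [he]
        rw [Finset.sum_ite_eq' Finset.univ _ (fun b => -matPow (diffMat m) r j b),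
          if_pos (Finset.mem_univ _)]
      case isFalse h =>
        apply Finset.sum_eq_zero
        intro b _
        rw [if_neg (by have := b.isLt; omega)]
    rw [hsecond, ih]
    have hjm := j.isLt
    have h2 : (if h : (c : ℕ) + 1 < m then
          -(if (c : ℕ) + 1 ≤ (j : ℕ) then
              (-1 : ℝ) ^ ((j : ℕ) - ((c : ℕ) + 1)) * (r.choose ((j : ℕ) - ((c : ℕ) + 1))) else 0)
        else 0)
        = if (c : ℕ) + 1 ≤ (j : ℕ) then
            -((-1 : ℝ) ^ ((j : ℕ) - (c : ℕ) - 1) * (r.choose ((j : ℕ) - (c : ℕ) - 1))) else 0 := by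
      by_cases hc1 : (c : ℕ) + 1 ≤ (j : ℕ)
      · rw [dif_pos (by omega), if_pos hc1, if_pos hc1,
          show (j : ℕ) - ((c : ℕ) + 1) = (j : ℕ) - (c : ℕ) - 1 from by omega]
      · rw [if_neg hc1]
        split
        · rw [neg_zero]
        · rfl
    have hih2 : ∀ h : (c : ℕ) + 1 < m, matPow (diffMat m) r j ⟨(c : ℕ) + 1, h⟩
        = if (c : ℕ) + 1 ≤ (j : ℕ) then
            (-1 : ℝ) ^ ((j : ℕ) - ((c : ℕ) + 1)) * (r.choose ((j : ℕ) - ((c : ℕ) + 1))) else 0 :=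
      fun h => ih ⟨(c : ℕ) + 1, h⟩
    by_cases hcj : (c : ℕ) ≤ (j : ℕ)
    · by_cases hc1 : (c : ℕ) + 1 ≤ (j : ℕ)
      · obtain ⟨t, ht⟩ : ∃ t, (j : ℕ) - (c : ℕ) = t + 1 := ⟨(j : ℕ) - (c : ℕ) - 1, by omega⟩
        have ht2 : (j : ℕ) - ((c : ℕ) + 1) = t := by omega
        rw [dif_pos (by omega : (c : ℕ) + 1 < m), hih2 (by omega), if_pos hcj, if_pos hc1,
          if_pos hcj, ht, ht2, Nat.choose_succ_succ]
        push_cast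
        ring
      · have hjc : (j : ℕ) = (c : ℕ) := by omega
        rw [if_pos hcj, if_pos hcj, show (j : ℕ) - (c : ℕ) = 0 from by omega]
        have hz : (if h : (c : ℕ) + 1 < m then
            -matPow (diffMat m) r j ⟨(c : ℕ) + 1, h⟩ else 0) = 0 := by
          split
          next h => rw [hih2 h, if_neg hc1, neg_zero]
          next h => rfl
        rw [hz]
        simp
    · rw [if_neg hcj, if_neg hcj, zero_add]
      split
      next h => rw [hih2 h, if_neg (by omega), neg_zero]
      next h => rfl

lemma myEntry (r lt lam p : ℕ) (hlam0 : 0 < lam) (i : Fin p) (c : Fin (lam * p)) :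
    matMul (condOp r lt lam p) (matPow (diffMat (lam * p)) r) i c
      = ∑ k ∈ range lam, condCoeff r lt k *
          (if (c : ℕ) ≤ (i : ℕ) * lam + k then
            (-1 : ℝ) ^ ((i : ℕ) * lam + k - (c : ℕ)) *
              (r.choose ((i : ℕ) * lam + k - (c : ℕ))) else 0) := by
  set g : ℕ → ℝ := fun n =>
    (if n / lam = (i : ℕ) then condCoeff r lt (n % lam) else 0) *
      (if (c : ℕ) ≤ n then
        (-1 : ℝ) ^ (n - (c : ℕ)) * (r.choose (n - (c : ℕ))) else 0) with hg
  have step1 : matMul (condOp r lt lam p) (matPow (diffMat (lam * p)) r) i c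
      = ∑ n ∈ range (lam * p), g n := by
    rw [← Fin.sum_univ_eq_sum_range g (lam * p)]
    show ∑ b : Fin (lam * p), condOp r lt lam p i b * matPow (diffMat (lam * p)) r b c = _
    apply Finset.sum_congr rfl
    intro b _
    rw [myMatPow_diff]
    rfl
  have step2 : ∑ n ∈ range (lam * p), g n
      = ∑ n ∈ Ico ((i : ℕ) * lam) ((i : ℕ) * lam + lam), g n := by
    symm
    apply Finset.sum_subset
    · intro n hn
      rw [Finset.mem_Ico] at hn
      rw [Finset.mem_range]
      have h1 : ((i : ℕ) + 1) * lam ≤ p * lam := Nat.mul_le_mul_right lam i.isLt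
      have h2 : ((i : ℕ) + 1) * lam = (i : ℕ) * lam + lam := by ring
      have h3 : p * lam = lam * p := Nat.mul_comm p lam
      omega
    · intro n _ hnot
      have hni : ¬ (n / lam = (i : ℕ)) := by
        intro h
        have h1 := Nat.div_add_mod n lam
        have h2 := Nat.mod_lt n hlam0
        rw [h] at h1
        have h3 : (i : ℕ) * lam = lam * (i : ℕ) := Nat.mul_comm _ _
        exact hnot (Finset.mem_Ico.mpr (by omega))
      show (if n / lam = (i : ℕ) then _ else 0) * _ = 0
      rw [if_neg hni, zero_mul]
  have step3 : ∑ n ∈ Ico ((i : ℕ) * lam) ((i : ℕ) * lam + lam), g n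
      = ∑ k ∈ range lam, g ((i : ℕ) * lam + k) := by
    rw [Finset.sum_Ico_eq_sum_range, Nat.add_sub_cancel_left]
  rw [step1, step2, step3]
  apply Finset.sum_congr rfl
  intro k hk
  have hklt : k < lam := Finset.mem_range.mp hk
  have hdiv : ((i : ℕ) * lam + k) / lam = (i : ℕ) := by
    rw [Nat.mul_comm (i : ℕ) lam, Nat.mul_add_div hlam0, Nat.div_eq_of_lt hklt, Nat.add_zero]
  have hmod : ((i : ℕ) * lam + k) % lam = k := by
    rw [Nat.mul_comm (i : ℕ) lam, Nat.mul_add_mod, Nat.mod_eq_of_lt hklt]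
  show (if ((i : ℕ) * lam + k) / lam = (i : ℕ)
      then condCoeff r lt (((i : ℕ) * lam + k) % lam) else 0) * _ = _
  rw [hdiv, if_pos rfl, hmod]

lemma myRowBound (r lt lam p : ℕ) (hlt : 0 < lt) (hdeg : r * (lt - 1) < lam) (i : Fin p) :
    ∑ c : Fin (lam * p),
        |matMul (condOp r lt lam p) (matPow (diffMat (lam * p)) r) i c| ≤ 2 ^ r := by
  have hlam0 : 0 < lam := by omega
  have hentry : ∀ c : Fin (lam * p),
      |matMul (condOp r lt lam p) (matPow (diffMat (lam * p)) r) i c|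
        ≤ ∑ j ∈ range (r + 1), (r.choose j : ℝ) *
            (if (c : ℕ) + r = (i : ℕ) * lam + j * lt then 1 else 0) := by
    intro c
    rw [myEntry r lt lam p hlam0 i c]
    by_cases hcb : (i : ℕ) * lam ≤ (c : ℕ)
    · have hA : ∑ k ∈ range lam, condCoeff r lt k *
          (if (c : ℕ) ≤ (i : ℕ) * lam + k then
            (-1 : ℝ) ^ ((i : ℕ) * lam + k - (c : ℕ)) *
              (r.choose ((i : ℕ) * lam + k - (c : ℕ))) else 0)
          = (-1 : ℝ) ^ r *
              ((1 - (X : Polynomial ℝ) ^ lt) ^ r).coeff ((c : ℕ) - (i : ℕ) * lam + r) := by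
        rw [← myKeyA r lt lam ((c : ℕ) - (i : ℕ) * lam) hlt hdeg]
        apply Finset.sum_congr rfl
        intro k _
        have hite : (if (c : ℕ) ≤ (i : ℕ) * lam + k then
              (-1 : ℝ) ^ ((i : ℕ) * lam + k - (c : ℕ)) *
                (r.choose ((i : ℕ) * lam + k - (c : ℕ))) else 0)
            = (if (c : ℕ) - (i : ℕ) * lam ≤ k then
              (-1 : ℝ) ^ (k - ((c : ℕ) - (i : ℕ) * lam)) *
                (r.choose (k - ((c : ℕ) - (i : ℕ) * lam))) else 0) := by
          rcases le_or_gt ((c : ℕ)) ((i : ℕ) * lam + k) with h | h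
          · rw [if_pos h, if_pos (by omega),
              show (i : ℕ) * lam + k - (c : ℕ) = k - ((c : ℕ) - (i : ℕ) * lam) from by omega]
          · rw [if_neg (by omega), if_neg (by omega)]
        rw [hite]
        rfl
      rw [hA, abs_mul, abs_pow, abs_neg, abs_one, one_pow, one_mul]
      refine (myGCoeffBound r lt ((c : ℕ) - (i : ℕ) * lam + r)).trans (le_of_eq ?_)
      apply Finset.sum_congr rfl
      intro j _
      congr 1
      exact if_congr (by omega) rfl rfl
    · push_neg at hcb
      by_cases he : (i : ℕ) * lam - (c : ℕ) ≤ r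
      · have hA : ∑ k ∈ range lam, condCoeff r lt k *
            (if (c : ℕ) ≤ (i : ℕ) * lam + k then
              (-1 : ℝ) ^ ((i : ℕ) * lam + k - (c : ℕ)) *
                (r.choose ((i : ℕ) * lam + k - (c : ℕ))) else 0)
            = (-1 : ℝ) ^ r *
                ((1 - (X : Polynomial ℝ) ^ lt) ^ r).coeff (r - ((i : ℕ) * lam - (c : ℕ))) := by
          rw [← myKeyB r lt lam ((i : ℕ) * lam - (c : ℕ)) hlt hdeg he]
          apply Finset.sum_congr rfl
          intro k _
          rw [if_pos (by omega : (c : ℕ) ≤ (i : ℕ) * lam + k),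
            show (i : ℕ) * lam + k - (c : ℕ) = k + ((i : ℕ) * lam - (c : ℕ)) from by omega]
          rfl
        rw [hA, abs_mul, abs_pow, abs_neg, abs_one, one_pow, one_mul]
        refine (myGCoeffBound r lt (r - ((i : ℕ) * lam - (c : ℕ)))).trans (le_of_eq ?_)
        apply Finset.sum_congr rfl
        intro j _
        congr 1
        exact if_congr (by omega) rfl rfl
      · have hA : ∑ k ∈ range lam, condCoeff r lt k *
            (if (c : ℕ) ≤ (i : ℕ) * lam + k then
              (-1 : ℝ) ^ ((i : ℕ) * lam + k - (c : ℕ)) *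
                (r.choose ((i : ℕ) * lam + k - (c : ℕ))) else 0) = 0 := by
          apply Finset.sum_eq_zero
          intro k _
          rw [if_pos (by omega),
            Nat.choose_eq_zero_of_lt (by omega : r < (i : ℕ) * lam + k - (c : ℕ))]
          simp
        rw [hA, abs_zero]
        positivity
  refine (Finset.sum_le_sum fun c _ => hentry c).trans ?_
  rw [Finset.sum_comm]
  have hj : ∀ j ∈ range (r + 1),
      (∑ c : Fin (lam * p), (r.choose j : ℝ) *
        (if (c : ℕ) + r = (i : ℕ) * lam + j * lt then 1 else 0)) ≤ (r.choose j : ℝ) := by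
    intro j _
    rw [← Finset.mul_sum]
    have hcard : (∑ c : Fin (lam * p),
        (if (c : ℕ) + r = (i : ℕ) * lam + j * lt then (1 : ℝ) else 0)) ≤ 1 := by
      rw [Finset.sum_boole]
      have hc1 : (Finset.univ.filter
          (fun c : Fin (lam * p) => (c : ℕ) + r = (i : ℕ) * lam + j * lt)).card ≤ 1 := by
        apply Finset.card_le_one.mpr
        intro a ha a' ha'
        simp only [Finset.mem_filter] at ha ha'
        exact Fin.ext (by omega)
      exact_mod_cast hc1
    exact mul_le_of_le_one_right (Nat.cast_nonneg _) hcard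
  refine (Finset.sum_le_sum hj).trans (le_of_eq ?_)
  rw [← Nat.cast_sum, Nat.sum_range_choose]
  push_cast
  ring

lemma myOpNormLe {a b : ℕ} (K : Fin a → Fin b → ℝ) (S : ℝ) (hS : 0 ≤ S)
    (h : ∑ i, ∑ j, |K i j| ≤ S) : opNormInfOne K ≤ S := by
  apply Real.sSup_le _ hS
  rintro t ⟨x, hx, rfl⟩
  obtain ⟨j0, hj0⟩ : ∃ j, x j ≠ 0 := by
    by_contra hc
    push_neg at hc
    exact hx (funext hc)
  have hbdd : BddAbove (Set.range fun i => |x i|) := Set.Finite.bddAbove (Set.finite_range _)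
  have hle : ∀ j, |x j| ≤ lInfNorm x := fun j => le_ciSup hbdd j
  have hpos : 0 < lInfNorm x := lt_of_lt_of_le (abs_pos.mpr hj0) (hle j0)
  rw [div_le_iff₀ hpos]
  calc l1Norm (matVec K x) = ∑ i, |∑ j, K i j * x j| := rfl
    _ ≤ ∑ i, ∑ j, |K i j * x j| :=
        Finset.sum_le_sum fun i _ => Finset.abs_sum_le_sum_abs _ _
    _ ≤ ∑ i, ∑ j, |K i j| * lInfNorm x := by
        apply Finset.sum_le_sum
        intro i _
        apply Finset.sum_le_sum
        intro j _
        rw [abs_mul]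
        exact mul_le_mul_of_nonneg_left (hle j) (abs_nonneg _)
    _ = (∑ i, ∑ j, |K i j|) * lInfNorm x := by
        rw [Finset.sum_mul]
        exact Finset.sum_congr rfl fun i _ => (Finset.sum_mul _ _ _).symm
    _ ≤ S * lInfNorm x := mul_le_mul_of_nonneg_right h hpos.le

lemma myL2Lower (r lt lam : ℕ) (hlt : 0 < lt) (hdeg : r * (lt - 1) < lam) :
    ((lt : ℝ) ^ r) / Real.sqrt lam ≤ l2Norm (condVec r lt lam) := by
  have hlam0 : 0 < lam := by omega
  set f := (∑ i ∈ range lt, (X : Polynomial ℝ) ^ i) ^ r with hf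
  have hsum : ∑ k ∈ range lam, f.coeff k = (lt : ℝ) ^ r := by
    have hdeg2 : f.natDegree < lam := lt_of_le_of_lt (myNatDegree_f_le r lt hlt) hdeg
    have heval := Polynomial.eval_eq_sum_range' hdeg2 (1 : ℝ)
    simp only [one_pow, mul_one] at heval
    rw [← heval, hf, Polynomial.eval_pow]
    have : Polynomial.eval (1 : ℝ) (∑ i ∈ range lt, (X : Polynomial ℝ) ^ i) = lt := by
      rw [Polynomial.eval_finset_sum]
      simp
    rw [this]
  have hcs : ((lt : ℝ) ^ r) ^ 2 ≤ lam * ∑ k ∈ range lam, (f.coeff k) ^ 2 := by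
    rw [← hsum]
    have := sq_sum_le_card_mul_sum_sq (s := range lam) (f := fun k => f.coeff k)
    simpa using this
  have hl2 : l2Norm (condVec r lt lam) = Real.sqrt (∑ k ∈ range lam, (f.coeff k) ^ 2) := by
    unfold l2Norm
    congr 1
    rw [← Fin.sum_univ_eq_sum_range (fun k => (f.coeff k) ^ 2) lam]
    rfl
  rw [hl2]
  rw [div_le_iff₀ (Real.sqrt_pos.mpr (by exact_mod_cast hlam0))]
  have h1 : Real.sqrt (∑ k ∈ range lam, (f.coeff k) ^ 2) * Real.sqrt lam
      = Real.sqrt (lam * ∑ k ∈ range lam, (f.coeff k) ^ 2) := by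
    rw [← Real.sqrt_mul (by positivity) _, mul_comm]
  rw [h1]
  exact Real.le_sqrt_of_sq_le hcs

end AuxProofs

/-- Bound on the (∞,1) operator norm of `Ṽ·P^r`. -/
theorem normCondOp_diffPow_opNorm_le (r lt p : ℕ) (hr : 0 < r) (hlt : 0 < lt)
    (hp : 0 < p) (lam : ℕ) (hlam : lam = r * lt - r + 1) :
    opNormInfOne (matMul (normCondOp r lt lam p) (matPow (diffMat (lam * p)) r)) ≤
      Real.sqrt (Real.pi / 2) * (8 * (r : ℝ)) ^ (r + 1) *
        (lam : ℝ) ^ (-(r : ℝ) + 1 / 2) := by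
    classical
  have hx : r * (lt - 1) + r = r * lt := by
    have h : r * lt = r * (lt - 1 + 1) := by rw [Nat.sub_add_cancel hlt]
    rw [h]; ring
  have hdeg : r * (lt - 1) < lam := by omega
  have hlam0 : 0 < lam := by omega
  have hlamle : lam ≤ r * lt := by omega
  set Q := matPow (diffMat (lam * p)) r with hQ
  set s0 := Real.sqrt (Real.pi / 2) / ((p : ℝ) * l2Norm (condVec r lt lam)) with hs0
  have hl2nn : (0 : ℝ) ≤ l2Norm (condVec r lt lam) := Real.sqrt_nonneg _
  have hs0nn : 0 ≤ s0 := div_nonneg (Real.sqrt_nonneg _) (mul_nonneg (Nat.cast_nonneg _) hl2nn)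
  have hfac : ∀ (i : Fin p) (c : Fin (lam * p)),
      matMul (normCondOp r lt lam p) Q i c = s0 * matMul (condOp r lt lam p) Q i c := by
    intro i c
    show (∑ j, normCondOp r lt lam p i j * Q j c) = s0 * ∑ j, condOp r lt lam p i j * Q j c
    rw [Finset.mul_sum]
    apply Finset.sum_congr rfl
    intro j _
    show (s0 * condOp r lt lam p i j) * Q j c = _
    ring
  have htot : (∑ i, ∑ c, |matMul (normCondOp r lt lam p) Q i c|) ≤ s0 * ((p : ℝ) * 2 ^ r) := by
    have h1 : (∑ i, ∑ c, |matMul (normCondOp r lt lam p) Q i c|)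
        = s0 * ∑ i, ∑ c, |matMul (condOp r lt lam p) Q i c| := by
      rw [Finset.mul_sum]
      apply Finset.sum_congr rfl
      intro i _
      rw [Finset.mul_sum]
      apply Finset.sum_congr rfl
      intro c _
      rw [hfac, abs_mul, abs_of_nonneg hs0nn]
    rw [h1]
    apply mul_le_mul_of_nonneg_left _ hs0nn
    calc (∑ i : Fin p, ∑ c, |matMul (condOp r lt lam p) Q i c|)
        ≤ ∑ _i : Fin p, (2 : ℝ) ^ r :=
          Finset.sum_le_sum fun i _ => myRowBound r lt lam p hlt hdeg i
      _ = (p : ℝ) * 2 ^ r := by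
          rw [Finset.sum_const, Finset.card_univ, Fintype.card_fin, nsmul_eq_mul]
  refine (myOpNormLe _ _ (mul_nonneg hs0nn (by positivity)) htot).trans ?_
  have hltR : (0 : ℝ) < (lt : ℝ) := by exact_mod_cast hlt
  have hlamR : (0 : ℝ) < (lam : ℝ) := by exact_mod_cast hlam0
  have hppos : (0 : ℝ) < (p : ℝ) := by exact_mod_cast hp
  have hvlow := myL2Lower r lt lam hlt hdeg
  have h0 : (0 : ℝ) < (lt : ℝ) ^ r / Real.sqrt lam :=
    div_pos (by positivity) (Real.sqrt_pos.mpr hlamR)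
  have hvpos : 0 < l2Norm (condVec r lt lam) := lt_of_lt_of_le h0 hvlow
  have e1 : s0 * ((p : ℝ) * 2 ^ r)
      = Real.sqrt (Real.pi / 2) * 2 ^ r / l2Norm (condVec r lt lam) := by
    rw [hs0]
    field_simp
  rw [e1]
  have e2 : Real.sqrt (Real.pi / 2) * 2 ^ r / l2Norm (condVec r lt lam)
      ≤ Real.sqrt (Real.pi / 2) * 2 ^ r / ((lt : ℝ) ^ r / Real.sqrt lam) :=
    div_le_div_of_nonneg_left (by positivity) h0 hvlow
  refine e2.trans ?_
  have e3 : Real.sqrt (Real.pi / 2) * 2 ^ r / ((lt : ℝ) ^ r / Real.sqrt lam)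
      = Real.sqrt (Real.pi / 2) * Real.sqrt lam * ((2 : ℝ) ^ r / (lt : ℝ) ^ r) := by
    rw [div_div_eq_mul_div]
    ring
  have hrw : (lam : ℝ) ^ (-(r : ℝ) + 1 / 2) = Real.sqrt lam / (lam : ℝ) ^ r := by
    rw [Real.rpow_add hlamR, Real.rpow_neg hlamR.le, Real.rpow_natCast,
      ← Real.sqrt_eq_rpow]
    ring
  have hkey : (2 : ℝ) ^ r / (lt : ℝ) ^ r ≤ (8 * (r : ℝ)) ^ (r + 1) / (lam : ℝ) ^ r := by
    rw [div_le_div_iff₀ (by positivity) (by positivity)]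
    have hlamleR : (lam : ℝ) ≤ (r : ℝ) * lt := by
      have h2 : (lam : ℝ) ≤ ((r * lt : ℕ) : ℝ) := by exact_mod_cast hlamle
      push_cast at h2
      exact h2
    have hr1 : (1 : ℝ) ≤ (r : ℝ) := by exact_mod_cast hr
    calc (2 : ℝ) ^ r * (lam : ℝ) ^ r
        ≤ (2 : ℝ) ^ r * ((r : ℝ) * lt) ^ r := by
          apply mul_le_mul_of_nonneg_left _ (by positivity)
          exact pow_le_pow_left₀ hlamR.le hlamleR r
      _ = ((2 : ℝ) * (r : ℝ)) ^ r * (lt : ℝ) ^ r := by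
          rw [mul_pow, mul_pow]
          ring
      _ ≤ (8 * (r : ℝ)) ^ (r + 1) * (lt : ℝ) ^ r := by
          apply mul_le_mul_of_nonneg_right _ (by positivity)
          calc ((2 : ℝ) * (r : ℝ)) ^ r ≤ ((8 : ℝ) * (r : ℝ)) ^ r := by
                apply pow_le_pow_left₀ (by positivity)
                linarith
            _ ≤ ((8 : ℝ) * (r : ℝ)) ^ (r + 1) := by
                apply pow_le_pow_right₀ (by linarith)
                exact Nat.le_succ r
  calc Real.sqrt (Real.pi / 2) * 2 ^ r / ((lt : ℝ) ^ r / Real.sqrt lam)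
      = Real.sqrt (Real.pi / 2) * Real.sqrt lam * ((2 : ℝ) ^ r / (lt : ℝ) ^ r) := e3
    _ ≤ Real.sqrt (Real.pi / 2) * Real.sqrt lam *
          ((8 * (r : ℝ)) ^ (r + 1) / (lam : ℝ) ^ r) :=
        mul_le_mul_of_nonneg_left hkey (by positivity)
    _ = Real.sqrt (Real.pi / 2) * (8 * (r : ℝ)) ^ (r + 1) * ((lam : ℝ) ^ (-(r : ℝ) + 1 / 2)) := by
        rw [hrw]
        ring
end

section
/- Let r, λ̃, p be positive integers, λ = r·λ̃ − r + 1, m = λ·p. Let v ∈ ℝ^λ be the condensation vector of order r, V = I_p ⊗ v ∈ ℝ^{p×m} the condensation operator, and P ∈ ℝ^{m×m} the first-order difference matrix. Then ‖V·P^r‖_{∞,∞} ≤ r·2^{3r−1}. -/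
open MeasureTheory ProbabilityTheory Real
open scoped NNReal ENNReal

section Aux

open Polynomial Finset

private lemma aux_geom_coeff (lt N : ℕ) :
    (∑ i ∈ range lt, (X : ℝ[X]) ^ i).coeff N = if N < lt then 1 else 0 := by
  rw [finset_sum_coeff]
  simp only [coeff_X_pow]
  rw [Finset.sum_ite_eq (range lt) N (fun _ => (1 : ℝ))]
  simp [Finset.mem_range]

private lemma aux_geom_natDegree (lt : ℕ) :
    (∑ i ∈ range lt, (X : ℝ[X]) ^ i).natDegree ≤ lt - 1 := by
  refine natDegree_sum_le_of_forall_le _ _ fun i hi => ?_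
  rw [natDegree_X_pow]
  exact Nat.le_pred_of_lt (Finset.mem_range.mp hi)

private lemma aux_pow_natDegree (lt r : ℕ) :
    ((∑ i ∈ range lt, (X : ℝ[X]) ^ i) ^ r).natDegree ≤ r * (lt - 1) :=
  le_trans natDegree_pow_le (Nat.mul_le_mul_left r (aux_geom_natDegree lt))

private lemma aux_coeff_zero (lt r N : ℕ) (hN : r * (lt - 1) < N) :
    ((∑ i ∈ range lt, (X : ℝ[X]) ^ i) ^ r).coeff N = 0 :=
  coeff_eq_zero_of_natDegree_lt (lt_of_le_of_lt (aux_pow_natDegree lt r) hN)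

private lemma aux_reflect_geom (lt : ℕ) :
    reflect (lt - 1) (∑ i ∈ range lt, (X : ℝ[X]) ^ i) = ∑ i ∈ range lt, (X : ℝ[X]) ^ i := by
  ext N
  rw [coeff_reflect, aux_geom_coeff, aux_geom_coeff]
  rcases le_or_gt N (lt - 1) with h | h
  · rw [revAt_le h]
    rcases Nat.eq_zero_or_pos lt with h0 | h0
    · subst h0; simp
    · have h1 : lt - 1 - N < lt := by omega
      have h2 : N < lt := by omega
      simp [h1, h2]
  · rw [revAt_eq_self_of_lt h]

private lemma aux_reflect_pow (lt r : ℕ) :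
    reflect (r * (lt - 1)) ((∑ i ∈ range lt, (X : ℝ[X]) ^ i) ^ r)
      = (∑ i ∈ range lt, (X : ℝ[X]) ^ i) ^ r := by
  induction r with
  | zero =>
    ext N
    rw [coeff_reflect]
    congr 1
    rcases Nat.eq_zero_or_pos N with h | h
    · simp [h]
    · exact revAt_eq_self_of_lt (by omega)
  | succ n ih =>
    rw [pow_succ, show (n + 1) * (lt - 1) = n * (lt - 1) + (lt - 1) by ring,
      reflect_mul _ _ (aux_pow_natDegree lt n) (aux_geom_natDegree lt), ih, aux_reflect_geom lt]

private lemma aux_palindrome (lt r : ℕ) {k : ℕ} (hk : k ≤ r * (lt - 1)) :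
    ((∑ i ∈ range lt, (X : ℝ[X]) ^ i) ^ r).coeff (r * (lt - 1) - k)
      = ((∑ i ∈ range lt, (X : ℝ[X]) ^ i) ^ r).coeff k := by
  conv_rhs => rw [← aux_reflect_pow lt r]
  rw [coeff_reflect, revAt_le hk]

private lemma aux_geom_mul (lt r : ℕ) :
    ((1 : ℝ[X]) - X) ^ r * (∑ i ∈ range lt, (X : ℝ[X]) ^ i) ^ r
      = ((1 : ℝ[X]) - X ^ lt) ^ r := by
  rw [← mul_pow]
  congr 1
  have h := geom_sum_mul (X : ℝ[X]) lt
  linear_combination -h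

private lemma aux_coeff_sum_bound (r lt M : ℕ) :
    ∑ N ∈ range M, |(((1 : ℝ[X]) - X ^ lt) ^ r).coeff N| ≤ 2 ^ r := by
  have hF : ((1 : ℝ[X]) - X ^ lt) ^ r
      = ∑ k ∈ range (r + 1), C ((-1 : ℝ) ^ (r - k) * (r.choose k : ℝ)) * X ^ (lt * (r - k)) := by
    have h := add_pow (1 : ℝ[X]) (-X ^ lt) r
    rw [show (1 : ℝ[X]) - X ^ lt = 1 + -X ^ lt from by ring, h]
    refine Finset.sum_congr rfl fun k _ => ?_
    rw [one_pow, one_mul, neg_pow, ← pow_mul]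
    simp only [map_mul, map_pow, map_neg, map_one, map_natCast]
    ring
  calc ∑ N ∈ range M, |(((1 : ℝ[X]) - X ^ lt) ^ r).coeff N|
      ≤ ∑ N ∈ range M, ∑ k ∈ range (r + 1),
          ((r.choose k : ℝ) * if N = lt * (r - k) then 1 else 0) := by
        refine Finset.sum_le_sum fun N _ => ?_
        rw [hF, finset_sum_coeff]
        refine le_trans (Finset.abs_sum_le_sum_abs _ _) (Finset.sum_le_sum fun k _ => ?_)
        rw [coeff_C_mul, coeff_X_pow, abs_mul, abs_mul, abs_pow, abs_neg, abs_one, one_pow,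
          one_mul]
        split_ifs <;> simp [abs_of_nonneg, Nat.cast_nonneg]
    _ = ∑ k ∈ range (r + 1), ∑ N ∈ range M,
          ((r.choose k : ℝ) * if N = lt * (r - k) then 1 else 0) := Finset.sum_comm
    _ ≤ ∑ k ∈ range (r + 1), (r.choose k : ℝ) := by
        refine Finset.sum_le_sum fun k _ => ?_
        rw [← Finset.mul_sum, Finset.sum_ite_eq' (range M) (lt * (r - k)) (fun _ => (1 : ℝ))]
        split_ifs <;> simp
    _ = 2 ^ r := by
        rw [← Nat.cast_sum]
        exact_mod_cast congrArg (Nat.cast : ℕ → ℝ) (Nat.sum_range_choose r)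

private lemma matMul_assoc {a b c d : ℕ} (A : Fin a → Fin b → ℝ) (B : Fin b → Fin c → ℝ)
    (C : Fin c → Fin d → ℝ) : matMul (matMul A B) C = matMul A (matMul B C) := by
  funext i k
  simp only [matMul, Finset.sum_mul, Finset.mul_sum]
  rw [Finset.sum_comm]
  refine Finset.sum_congr rfl fun l _ => Finset.sum_congr rfl fun j _ => by ring

private lemma aux_diff_apply (m : ℕ) (g : Fin m → ℝ) (c : Fin m) :
    ∑ jj, g jj * diffMat m jj c
      = g c - (if h : (c : ℕ) + 1 < m then g ⟨(c : ℕ) + 1, h⟩ else 0) := by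
  have hsplit : ∀ jj : Fin m, g jj * diffMat m jj c
      = (if jj = c then g jj else 0) + (if (jj : ℕ) = (c : ℕ) + 1 then -(g jj) else 0) := by
    intro jj
    simp only [diffMat, Fin.ext_iff]
    split_ifs <;> first | (exfalso; omega) | ring
  rw [Finset.sum_congr rfl fun jj _ => hsplit jj, Finset.sum_add_distrib,
    Finset.sum_ite_eq' Finset.univ c g]
  simp only [Finset.mem_univ, if_true]
  rw [sub_eq_add_neg]
  congr 1
  by_cases h : (c : ℕ) + 1 < m
  · rw [dif_pos h]
    have hiff : ∀ jj : Fin m, ((jj : ℕ) = (c : ℕ) + 1) = (jj = ⟨(c : ℕ) + 1, h⟩) := fun jj => by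
      rw [Fin.ext_iff]
    simp_rw [hiff]
    rw [Finset.sum_ite_eq' Finset.univ (⟨(c : ℕ) + 1, h⟩ : Fin m) (fun jj => -(g jj))]
    simp
  · rw [dif_neg h, neg_zero]
    refine Finset.sum_eq_zero fun jj _ => ?_
    have := jj.isLt
    rw [if_neg (by omega)]

end Aux

section Aux2

open Polynomial Finset

private lemma aux_key (r lt' p : ℕ) (lam : ℕ)
    (hlam : lam = r * (lt' + 1) - r + 1) (i : Fin p) (n : ℕ) :
    ∀ c : Fin (lam * p),
      matMul (condOp r (lt' + 1) lam p) (matPow (diffMat (lam * p)) n) i c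
        = if (c : ℕ) ≤ (i : ℕ) * lam + (lam - 1)
          then (((1 : ℝ[X]) - X) ^ n
              * (∑ j ∈ range (lt' + 1), (X : ℝ[X]) ^ j) ^ r).coeff
              ((i : ℕ) * lam + (lam - 1) - (c : ℕ))
          else 0 := by
  have hlam' : lam = r * lt' + 1 := by
    have h : r * (lt' + 1) = r * lt' + r := by ring
    omega
  have hlam0 : 0 < lam := by omega
  have hD : r * (lt' + 1 - 1) = lam - 1 := by
    simp only [Nat.add_sub_cancel]
    omega
  have hBm : (i : ℕ) * lam + (lam - 1) < lam * p := by
    have h3 : ((i : ℕ) + 1) * lam ≤ p * lam :=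
      Nat.mul_le_mul_right lam (Nat.succ_le_of_lt i.isLt)
    have h4 : ((i : ℕ) + 1) * lam = (i : ℕ) * lam + lam := by ring
    have h5 : lam * p = p * lam := Nat.mul_comm lam p
    omega
  induction n with
  | zero =>
    intro c
    have h0 : matMul (condOp r (lt' + 1) lam p) (matPow (diffMat (lam * p)) 0) i c
        = condOp r (lt' + 1) lam p i c := by
      simp [matMul, matPow, mul_ite, mul_one, mul_zero, Finset.sum_ite_eq']
    rw [h0, pow_zero, one_mul]
    simp only [condOp, kronRow, condVec, condCoeff]
    by_cases h1 : (c : ℕ) < (i : ℕ) * lam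
    · have hdiv : (c : ℕ) / lam < (i : ℕ) := (Nat.div_lt_iff_lt_mul hlam0).mpr h1
      rw [if_neg (by omega), if_pos (by omega)]
      exact (aux_coeff_zero (lt' + 1) r _ (by omega)).symm
    · by_cases h2 : (c : ℕ) ≤ (i : ℕ) * lam + (lam - 1)
      · have hc : (c : ℕ) = ((c : ℕ) - (i : ℕ) * lam) + lam * (i : ℕ) := by
          have := Nat.mul_comm (i : ℕ) lam
          omega
        have hklt : (c : ℕ) - (i : ℕ) * lam < lam := by omega
        have hdiv : (c : ℕ) / lam = (i : ℕ) := by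
          conv_lhs => rw [hc]
          rw [Nat.add_mul_div_left _ _ hlam0, Nat.div_eq_of_lt hklt, zero_add]
        have hmod : (c : ℕ) % lam = (c : ℕ) - (i : ℕ) * lam := by
          conv_lhs => rw [hc]
          rw [Nat.add_mul_mod_self_left, Nat.mod_eq_of_lt hklt]
        rw [if_pos hdiv, if_pos h2]
        show ((∑ j ∈ range (lt' + 1), (X : ℝ[X]) ^ j) ^ r).coeff ((c : ℕ) % lam) = _
        rw [hmod]
        have harith : (i : ℕ) * lam + (lam - 1) - (c : ℕ)
            = r * (lt' + 1 - 1) - ((c : ℕ) - (i : ℕ) * lam) := by omega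
        rw [harith]
        exact (aux_palindrome (lt' + 1) r (by omega)).symm
      · have h4 : ((i : ℕ) + 1) * lam = (i : ℕ) * lam + lam := by ring
        have hge : ((i : ℕ) + 1) * lam ≤ (c : ℕ) := by omega
        have hdiv : (i : ℕ) + 1 ≤ (c : ℕ) / lam := (Nat.le_div_iff_mul_le hlam0).mpr hge
        rw [if_neg (by omega), if_neg h2]
  | succ n ih =>
    intro c
    have hrw : matMul (condOp r (lt' + 1) lam p) (matPow (diffMat (lam * p)) (n + 1)) i c
        = ∑ jj, matMul (condOp r (lt' + 1) lam p) (matPow (diffMat (lam * p)) n) i jj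
            * diffMat (lam * p) jj c := by
      have h : matPow (diffMat (lam * p)) (n + 1)
          = matMul (matPow (diffMat (lam * p)) n) (diffMat (lam * p)) := rfl
      rw [h, ← matMul_assoc]
      rfl
    rw [hrw, aux_diff_apply (lam * p) _ c]
    simp only [ih]
    have hsucc : ((1 : ℝ[X]) - X) ^ (n + 1) * (∑ j ∈ range (lt' + 1), (X : ℝ[X]) ^ j) ^ r
        = (1 - X) * (((1 : ℝ[X]) - X) ^ n
            * (∑ j ∈ range (lt' + 1), (X : ℝ[X]) ^ j) ^ r) := by ring
    rw [hsucc]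
    set G := ((1 : ℝ[X]) - X) ^ n * (∑ j ∈ range (lt' + 1), (X : ℝ[X]) ^ j) ^ r with hG
    have hXG : (X * G).coeff 0 = 0 := by
      rw [mul_coeff_zero, coeff_X_zero, zero_mul]
    have hcoeff0 : ((1 - X) * G).coeff 0 = G.coeff 0 := by
      rw [sub_mul, one_mul, coeff_sub, hXG, sub_zero]
    have hcoeffS : ∀ N, ((1 - X) * G).coeff (N + 1) = G.coeff (N + 1) - G.coeff N := by
      intro N
      rw [sub_mul, one_mul, coeff_sub, coeff_X_mul]
    set B := (i : ℕ) * lam + (lam - 1) with hB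
    by_cases h2 : (c : ℕ) ≤ B
    · rcases eq_or_lt_of_le h2 with heq | hlt2
      · have hd : (if h : (c : ℕ) + 1 < lam * p then
            (if ((⟨(c : ℕ) + 1, h⟩ : Fin (lam * p)) : ℕ) ≤ B
              then G.coeff (B - ((⟨(c : ℕ) + 1, h⟩ : Fin (lam * p)) : ℕ)) else 0)
            else 0) = 0 := by
          rcases Nat.lt_or_ge ((c : ℕ) + 1) (lam * p) with h | h
          · rw [dif_pos h, if_neg (by simp; omega)]
          · rw [dif_neg (by omega)]
        rw [hd, sub_zero, if_pos h2, if_pos h2]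
        have h0 : B - (c : ℕ) = 0 := by omega
        rw [h0, hcoeff0]
      · have hc1 : (c : ℕ) + 1 < lam * p := by omega
        rw [dif_pos hc1]
        rw [if_pos h2, if_pos h2, if_pos (show ((⟨(c : ℕ) + 1, hc1⟩ : Fin (lam * p)) : ℕ) ≤ B
          from by simp; omega)]
        have harith : B - (c : ℕ) = (B - ((c : ℕ) + 1)) + 1 := by omega
        rw [harith, hcoeffS]
    · have hd : (if h : (c : ℕ) + 1 < lam * p then
          (if ((⟨(c : ℕ) + 1, h⟩ : Fin (lam * p)) : ℕ) ≤ B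
            then G.coeff (B - ((⟨(c : ℕ) + 1, h⟩ : Fin (lam * p)) : ℕ)) else 0)
          else 0) = 0 := by
        rcases Nat.lt_or_ge ((c : ℕ) + 1) (lam * p) with h | h
        · rw [dif_pos h, if_neg (by simp; omega)]
        · rw [dif_neg (by omega)]
      rw [hd, sub_zero, if_neg h2, if_neg h2]

end Aux2
section Aux3

open Polynomial Finset

private lemma aux_rowsum (r lt p : ℕ) (hr : 0 < r) (hlt : 0 < lt) (hp : 0 < p)
    (lam : ℕ) (hlam : lam = r * lt - r + 1) (i : Fin p) :
    ∑ c, |matMul (condOp r lt lam p) (matPow (diffMat (lam * p)) r) i c| ≤ 2 ^ r := by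
  obtain ⟨lt', rfl⟩ : ∃ lt', lt = lt' + 1 := ⟨lt - 1, by omega⟩
  set B := (i : ℕ) * lam + (lam - 1) with hB
  have hlam0 : 0 < lam := by
    have h : r * (lt' + 1) = r * lt' + r := by ring
    omega
  have hBm : B < lam * p := by
    have h3 : ((i : ℕ) + 1) * lam ≤ p * lam :=
      Nat.mul_le_mul_right lam (Nat.succ_le_of_lt i.isLt)
    have h4 : ((i : ℕ) + 1) * lam = (i : ℕ) * lam + lam := by ring
    have h5 : lam * p = p * lam := Nat.mul_comm lam p
    omega
  have hform : ∀ c : Fin (lam * p),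
      |matMul (condOp r (lt' + 1) lam p) (matPow (diffMat (lam * p)) r) i c|
        = if (c : ℕ) ≤ B then |(((1 : ℝ[X]) - X ^ (lt' + 1)) ^ r).coeff (B - (c : ℕ))| else 0 := by
    intro c
    rw [aux_key r lt' p lam hlam i r c, ← aux_geom_mul (lt' + 1) r]
    split_ifs <;> simp [hB]
  calc ∑ c, |matMul (condOp r (lt' + 1) lam p) (matPow (diffMat (lam * p)) r) i c|
      = ∑ c : Fin (lam * p),
          (if (c : ℕ) ≤ B then |(((1 : ℝ[X]) - X ^ (lt' + 1)) ^ r).coeff (B - (c : ℕ))| else 0) :=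
        Finset.sum_congr rfl fun c _ => hform c
    _ = ∑ x ∈ range (lam * p),
          (if x ≤ B then |(((1 : ℝ[X]) - X ^ (lt' + 1)) ^ r).coeff (B - x)| else 0) :=
        Fin.sum_univ_eq_sum_range
          (fun x : ℕ => (if x ≤ B then |(((1 : ℝ[X]) - X ^ (lt' + 1)) ^ r).coeff (B - x)|
            else 0 : ℝ)) (lam * p)
    _ = ∑ x ∈ range (B + 1), |(((1 : ℝ[X]) - X ^ (lt' + 1)) ^ r).coeff (B - x)| := by
        rw [← Finset.sum_subset (Finset.range_subset_range.mpr (by omega : B + 1 ≤ lam * p))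
          (fun x _ hx => if_neg (by simp only [Finset.mem_range] at hx ⊢; omega))]
        exact Finset.sum_congr rfl fun x hx =>
          if_pos (by simp only [Finset.mem_range] at hx; omega)
    _ = ∑ N ∈ range (B + 1), |(((1 : ℝ[X]) - X ^ (lt' + 1)) ^ r).coeff N| := by
        have h := Finset.sum_range_reflect
          (fun N => |(((1 : ℝ[X]) - X ^ (lt' + 1)) ^ r).coeff N|) (B + 1)
        simpa using h
    _ ≤ 2 ^ r := aux_coeff_sum_bound r (lt' + 1) (B + 1)

end Aux3

/-- Bound on the (∞,∞) operator norm of `V·P^r`. -/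
theorem condOp_diffPow_opNorm_le (r lt p : ℕ) (hr : 0 < r) (hlt : 0 < lt)
    (hp : 0 < p) (lam : ℕ) (hlam : lam = r * lt - r + 1) :
    opNormInfInf (matMul (condOp r lt lam p) (matPow (diffMat (lam * p)) r)) ≤
      (r : ℝ) * 2 ^ (3 * r - 1) := by
  set K := matMul (condOp r lt lam p) (matPow (diffMat (lam * p)) r) with hK
  have hlam0 : 0 < lam := by
    have h : r * lt ≥ r := Nat.le_mul_of_pos_right r hlt
    omega
  haveI : Nonempty (Fin p) := ⟨⟨0, hp⟩⟩
  have hrow : ∀ i, ∑ c, |K i c| ≤ 2 ^ r := aux_rowsum r lt p hr hlt hp lam hlam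
  have h2r : (2 : ℝ) ^ r ≤ (r : ℝ) * 2 ^ (3 * r - 1) := by
    have h1 : (2 : ℝ) ^ r ≤ 2 ^ (3 * r - 1) :=
      pow_le_pow_right₀ (by norm_num) (by omega)
    have h2 : (1 : ℝ) ≤ (r : ℝ) := by exact_mod_cast hr
    nlinarith [pow_pos (by norm_num : (0 : ℝ) < 2) (3 * r - 1)]
  refine Real.sSup_le ?_ (by positivity)
  rintro t ⟨x, hx, rfl⟩
  have hxb : ∀ j, |x j| ≤ lInfNorm x := fun j => by
    simpa [lInfNorm] using le_ciSup (Set.Finite.bddAbove (Set.finite_range fun i => |x i|)) j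
  have hxpos : 0 < lInfNorm x := by
    obtain ⟨j, hj⟩ : ∃ j, x j ≠ 0 := by
      by_contra hcon
      push_neg at hcon
      exact hx (funext hcon)
    exact lt_of_lt_of_le (abs_pos.mpr hj) (hxb j)
  rw [div_le_iff₀ hxpos]
  have hKx : ∀ i, |matVec K x i| ≤ 2 ^ r * lInfNorm x := by
    intro i
    calc |∑ c, K i c * x c| ≤ ∑ c, |K i c * x c| := Finset.abs_sum_le_sum_abs _ _
      _ ≤ ∑ c, |K i c| * lInfNorm x := Finset.sum_le_sum fun c _ => by
          rw [abs_mul]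
          exact mul_le_mul_of_nonneg_left (hxb c) (abs_nonneg _)
      _ = (∑ c, |K i c|) * lInfNorm x := (Finset.sum_mul _ _ _).symm
      _ ≤ 2 ^ r * lInfNorm x := mul_le_mul_of_nonneg_right (hrow i) hxpos.le
  calc lInfNorm (matVec K x) ≤ 2 ^ r * lInfNorm x := by simpa [lInfNorm] using ciSup_le hKx
    _ ≤ (r : ℝ) * 2 ^ (3 * r - 1) * lInfNorm x :=
      mul_le_mul_of_nonneg_right h2r hxpos.le
end

section
/- Let r, λ̃ be positive integers and λ = r·λ̃ − r + 1. Then the condensation vector v ∈ ℝ^λ of order r satisfies ‖v‖₂ ≥ λ^{r−1/2}·r^{−r}. -/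
open MeasureTheory ProbabilityTheory Real
open scoped NNReal ENNReal

open Polynomial in
lemma sum_condCoeff_aux' (r lt lam : ℕ) (hlt : 0 < lt)
    (hlam : lam = r * lt - r + 1) :
    ∑ j ∈ Finset.range lam,
      ((∑ i ∈ Finset.range lt, (Polynomial.X : Polynomial ℝ) ^ i) ^ r).coeff j
      = (lt : ℝ) ^ r := by
  set P : Polynomial ℝ := (∑ i ∈ Finset.range lt, (X : Polynomial ℝ) ^ i) ^ r with hP
  have hdeg : P.natDegree < lam := by
    have h1 : (∑ i ∈ Finset.range lt, (X : Polynomial ℝ) ^ i).natDegree ≤ lt - 1 := by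
      apply Polynomial.natDegree_sum_le_of_forall_le
      intro i hi
      simpa using Nat.le_sub_one_of_lt (Finset.mem_range.mp hi)
    have h2 : P.natDegree ≤ r * (lt - 1) := Polynomial.natDegree_pow_le_of_le r h1
    have : r * (lt - 1) = r * lt - r := by
      cases lt with
      | zero => omega
      | succ n => simp [Nat.mul_succ]
    omega
  have := Polynomial.eval_eq_sum_range' hdeg (1 : ℝ)
  simp only [one_pow, mul_one] at this
  rw [← this, hP]
  simp [Polynomial.eval_pow, Polynomial.eval_finset_sum]

/-- Lower bound on the ℓ² norm of the condensation vector. -/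
theorem condVec_l2Norm_ge (r lt : ℕ) (hr : 0 < r) (hlt : 0 < lt)
    (lam : ℕ) (hlam : lam = r * lt - r + 1) :
    (lam : ℝ) ^ ((r : ℝ) - 1 / 2) * (r : ℝ) ^ (-(r : ℝ)) ≤
      l2Norm (condVec r lt lam) := by
  have hrl : r ≤ r * lt := Nat.le_mul_of_pos_right r hlt
  have hlam0 : 0 < lam := by omega
  have hL : (0:ℝ) < (lam:ℝ) := by exact_mod_cast hlam0
  have hR : (0:ℝ) < (r:ℝ) := by exact_mod_cast hr
  have hT : (0:ℝ) < (lt:ℝ) := by exact_mod_cast hlt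
  have hLRT : (lam:ℝ) ≤ (r:ℝ) * (lt:ℝ) := by
    have h : lam ≤ r * lt := by omega
    exact_mod_cast h
  set L := (lam:ℝ); set R := (r:ℝ); set T := (lt:ℝ)
  set S := ∑ i : Fin lam, (condVec r lt lam i) ^ 2 with hSdef
  have hsum : ∑ i : Fin lam, condVec r lt lam i = T ^ r := by
    rw [show (∑ i : Fin lam, condVec r lt lam i) =
        ∑ j ∈ Finset.range lam, condCoeff r lt j from
      Fin.sum_univ_eq_sum_range (fun j => condCoeff r lt j) lam]
    exact sum_condCoeff_aux' r lt lam hlt hlam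
  have hCS : T ^ (2*r) ≤ L * S := by
    have := sq_sum_le_card_mul_sum_sq (s := (Finset.univ : Finset (Fin lam)))
      (f := condVec r lt lam)
    rw [hsum] at this
    simpa [← pow_mul, mul_comm, hSdef] using this
  have hS0 : 0 ≤ S := Finset.sum_nonneg fun i _ => sq_nonneg _
  rw [l2Norm, ← hSdef, Real.le_sqrt (by positivity) hS0]
  have e1 : ((L ^ ((r:ℝ) - 1/2)) : ℝ) ^ 2 = L ^ (2*r - 1 : ℕ) := by
    rw [← Real.rpow_natCast (L ^ ((r:ℝ) - 1/2)) 2, ← Real.rpow_mul hL.le,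
      show ((r:ℝ) - 1/2) * (2:ℕ) = ((2*r - 1 : ℕ):ℝ) by
        push_cast [Nat.cast_sub (by omega : 1 ≤ 2*r)]; ring,
      Real.rpow_natCast]
  have e2 : ((R ^ (-(r:ℝ))) : ℝ) ^ 2 = (R ^ (2*r : ℕ))⁻¹ := by
    rw [← Real.rpow_natCast (R ^ (-(r:ℝ))) 2, ← Real.rpow_mul hR.le,
      show (-(r:ℝ)) * (2:ℕ) = -((2*r:ℕ):ℝ) by push_cast; ring,
      Real.rpow_neg hR.le, Real.rpow_natCast]
  rw [mul_pow, e1, e2]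
  have step1 : L ^ (2*r-1) * (R ^ (2*r))⁻¹ ≤ T ^ (2*r) / L := by
    rw [← div_eq_mul_inv, div_le_div_iff₀ (by positivity) hL]
    have hpow : L ^ (2*r-1) * L = L ^ (2*r) := by
      rw [← pow_succ]; congr 1; omega
    rw [hpow]
    calc L ^ (2*r) ≤ (R*T) ^ (2*r) := pow_le_pow_left₀ hL.le hLRT _
      _ = T ^ (2*r) * R ^ (2*r) := by rw [mul_pow]; ring
  refine step1.trans ?_
  rw [div_le_iff₀ hL]
  linarith [hCS]
end

section
/- Let c₀ > 0, let n, m be positive integers, let β > 0, and let μ > 0 satisfy μ ≥ 2√(β + log(2m)). Let s ∈ (0, 1] satisfy s ≥ c₀²μ²/(8n), and let A ∈ ℝ^{m×n} be a sparse Gaussian random matrix with sparsity parameter s. Then for every x ∈ ℝ^n with ‖x‖_∞ ≤ c₀·n^{−1/2}·‖x‖₂, one has P( ‖A·x‖_∞ ≤ μ·‖x‖₂ ) ≥ 1 − e^{−β}. -/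
open MeasureTheory ProbabilityTheory Real
open scoped NNReal ENNReal

set_option maxHeartbeats 1000000

section Aux

lemma gauss_pdf_mul_exp (v : ℝ≥0) (hv : v ≠ 0) (c x : ℝ) :
    gaussianPDFReal 0 v x * Real.exp (c * x)
      = Real.exp ((v : ℝ) * c ^ 2 / 2) * gaussianPDFReal ((v : ℝ) * c) v x := by
  have hv' : (v : ℝ) ≠ 0 := by exact_mod_cast hv
  simp only [gaussianPDFReal]
  have h : -(x - 0) ^ 2 / (2 * (v:ℝ)) + c * x
      = (v:ℝ) * c ^ 2 / 2 + -(x - (v:ℝ)*c) ^ 2 / (2 * (v:ℝ)) := by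
    field_simp
    ring
  rw [mul_assoc, ← Real.exp_add, h, Real.exp_add]
  ring

lemma integrable_exp_mul_gaussianReal (v : ℝ≥0) (hv : v ≠ 0) (c : ℝ) :
    Integrable (fun z => Real.exp (c * z)) (gaussianReal 0 v) := by
  rw [gaussianReal_of_var_ne_zero _ hv]
  have hmeas : Measurable fun x => Real.toNNReal (gaussianPDFReal 0 v x) :=
    (measurable_gaussianPDFReal 0 v).real_toNNReal
  have : (gaussianPDF 0 v) = fun x => ((Real.toNNReal (gaussianPDFReal 0 v x) : ℝ≥0) : ℝ≥0∞) := rfl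
  rw [this, integrable_withDensity_iff_integrable_smul hmeas]
  have : (fun x => Real.toNNReal (gaussianPDFReal 0 v x) • Real.exp (c * x))
      = fun x => Real.exp ((v : ℝ) * c ^ 2 / 2) * gaussianPDFReal ((v : ℝ) * c) v x := by
    funext x
    rw [NNReal.smul_def, smul_eq_mul, Real.coe_toNNReal _ (gaussianPDFReal_nonneg 0 v x),
      gauss_pdf_mul_exp v hv c x]
  rw [this]
  exact (integrable_gaussianPDFReal _ _).const_mul _

lemma integral_exp_mul_gaussianReal (v : ℝ≥0) (hv : v ≠ 0) (c : ℝ) :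
    ∫ z, Real.exp (c * z) ∂(gaussianReal 0 v) = Real.exp ((v : ℝ) * c ^ 2 / 2) := by
  rw [gaussianReal_of_var_ne_zero _ hv]
  have hmeas : Measurable fun x => Real.toNNReal (gaussianPDFReal 0 v x) :=
    (measurable_gaussianPDFReal 0 v).real_toNNReal
  have h1 : (volume.withDensity (gaussianPDF 0 v))
      = volume.withDensity (fun x => ((Real.toNNReal (gaussianPDFReal 0 v x) : ℝ≥0) : ℝ≥0∞)) := rfl
  rw [h1, integral_withDensity_eq_integral_smul hmeas]
  have : (fun x => Real.toNNReal (gaussianPDFReal 0 v x) • Real.exp (c * x))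
      = fun x => Real.exp ((v : ℝ) * c ^ 2 / 2) * gaussianPDFReal ((v : ℝ) * c) v x := by
    funext x
    rw [NNReal.smul_def, smul_eq_mul, Real.coe_toNNReal _ (gaussianPDFReal_nonneg 0 v x),
      gauss_pdf_mul_exp v hv c x]
  rw [this, integral_const_mul, integral_gaussianPDFReal_eq_one _ hv, mul_one]


lemma sparse_isProb {s : ℝ} (hs0 : 0 < s) (hs1 : s ≤ 1) :
    IsProbabilityMeasure (sparseGaussianLaw s) := by
  constructor
  rw [sparseGaussianLaw]
  simp only [Measure.add_apply, Measure.smul_apply, measure_univ, smul_eq_mul, mul_one]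
  rw [ENNReal.smul_def, ENNReal.smul_def, smul_eq_mul, smul_eq_mul, mul_one, mul_one,
    ← ENNReal.coe_add, ← Real.toNNReal_add (by linarith) hs0.le]
  norm_num

lemma sparse_var_ne_zero {s : ℝ} (hs0 : 0 < s) : (Real.toNNReal s)⁻¹ ≠ 0 := by
  simp [Real.toNNReal_eq_zero, not_le, hs0]

lemma integrable_exp_dirac (c : ℝ) :
    Integrable (fun z => Real.exp (c * z)) (Measure.dirac (0 : ℝ)) := by
  refine ⟨(by fun_prop : Measurable fun z => Real.exp (c * z)).aestronglyMeasurable, ?_⟩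
  rw [HasFiniteIntegral, lintegral_dirac]
  exact ENNReal.coe_lt_top

lemma integrable_exp_sparse {s : ℝ} (hs0 : 0 < s) (c : ℝ) :
    Integrable (fun z => Real.exp (c * z)) (sparseGaussianLaw s) := by
  rw [sparseGaussianLaw]
  rw [integrable_add_measure]
  constructor
  · exact (integrable_exp_dirac c).smul_measure_nnreal
  · exact (integrable_exp_mul_gaussianReal _ (sparse_var_ne_zero hs0) c).smul_measure_nnreal

lemma integral_exp_sparse {s : ℝ} (hs0 : 0 < s) (hs1 : s ≤ 1) (c : ℝ) :
    ∫ z, Real.exp (c * z) ∂(sparseGaussianLaw s)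
      = (1 - s) + s * Real.exp (c ^ 2 / (2 * s)) := by
  rw [sparseGaussianLaw, integral_add_measure
    ((integrable_exp_dirac c).smul_measure_nnreal)
    ((integrable_exp_mul_gaussianReal _ (sparse_var_ne_zero hs0) c).smul_measure_nnreal),
    integral_smul_nnreal_measure, integral_smul_nnreal_measure, integral_dirac,
    integral_exp_mul_gaussianReal _ (sparse_var_ne_zero hs0) c]
  have hc : ((Real.toNNReal s)⁻¹ : ℝ≥0) = (s⁻¹ : ℝ) := by
    rw [NNReal.coe_inv, Real.coe_toNNReal _ hs0.le]
  rw [hc]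
  simp only [mul_zero, Real.exp_zero, NNReal.smul_def, smul_eq_mul, mul_one]
  rw [Real.coe_toNNReal _ (by linarith : (0:ℝ) ≤ 1 - s), Real.coe_toNNReal _ hs0.le]
  congr 2
  field_simp

lemma pi_map_eval {ι : Type*} [Fintype ι] {α : ι → Type*} [∀ i, MeasurableSpace (α i)]
    (μ : ∀ i, Measure (α i)) [∀ i, IsProbabilityMeasure (μ i)] (i : ι) :
    (Measure.pi μ).map (Function.eval i) = μ i := by
  classical
  ext s hs
  rw [Measure.map_apply (measurable_pi_apply i) hs, Set.eval_preimage, Measure.pi_pi,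
    Finset.prod_eq_single i (fun b _ hb => by simp [Function.update_of_ne hb]) (by simp)]
  simp

lemma pi_prod_integral {ι : Type*} [Fintype ι] (μ : Measure ℝ) [IsProbabilityMeasure μ]
    (f : ι → ℝ → ℝ) :
    ∫ x : ι → ℝ, ∏ i, f i (x i) ∂(Measure.pi fun _ => μ) = ∏ i, ∫ z, f i z ∂μ := by
  letI : MeasureSpace ℝ := ⟨μ⟩
  have h1 : (Measure.pi fun _ : ι => μ) = (volume : Measure (ι → ℝ)) := by
    rw [MeasureTheory.volume_pi]
    rfl
  rw [h1]
  exact MeasureTheory.integral_fintype_prod_eq_prod (fun i => f i)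



lemma pi_prod_integrable {ι : Type*} [Fintype ι] (μ : Measure ℝ) [IsProbabilityMeasure μ]
    (f : ι → ℝ → ℝ) (hf : ∀ i, Integrable (f i) μ) :
    Integrable (fun x : ι → ℝ => ∏ i, f i (x i)) (Measure.pi fun _ => μ) := by
  letI : MeasureSpace ℝ := ⟨μ⟩
  have h1 : (Measure.pi fun _ : ι => μ) = (volume : Measure (ι → ℝ)) := by
    rw [MeasureTheory.volume_pi]
    rfl
  rw [h1]
  exact MeasureTheory.Integrable.fintype_prod hf


lemma abs_le_lInfNorm {k : ℕ} (x : Fin k → ℝ) (i : Fin k) : |x i| ≤ lInfNorm x := by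
  unfold lInfNorm
  exact le_ciSup (f := fun j => |x j|) (Set.Finite.bddAbove (Set.finite_range _)) i

lemma lInfNorm_le_iff {k : ℕ} (hk : 0 < k) (x : Fin k → ℝ) (r : ℝ) :
    lInfNorm x ≤ r ↔ ∀ i, |x i| ≤ r := by
  haveI : Nonempty (Fin k) := ⟨⟨0, hk⟩⟩
  unfold lInfNorm
  exact ciSup_le_iff (Set.Finite.bddAbove (Set.finite_range _))

lemma l2Norm_nonneg {k : ℕ} (x : Fin k → ℝ) : 0 ≤ l2Norm x := Real.sqrt_nonneg _

lemma l2Norm_sq {k : ℕ} (x : Fin k → ℝ) : l2Norm x ^ 2 = ∑ i, (x i) ^ 2 :=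
  Real.sq_sqrt (Finset.sum_nonneg fun i _ => sq_nonneg _)

lemma l2Norm_neg {k : ℕ} (x : Fin k → ℝ) : l2Norm (fun i => -x i) = l2Norm x := by
  unfold l2Norm; congr 1; exact Finset.sum_congr rfl fun i _ => by ring

lemma lInfNorm_neg {k : ℕ} (x : Fin k → ℝ) : lInfNorm (fun i => -x i) = lInfNorm x := by
  unfold lInfNorm; congr 1; funext i; exact abs_neg _

lemma exp_le_one_add {u : ℝ} (h0 : 0 ≤ u) (h1 : u ≤ 1) :
    Real.exp u ≤ 1 + (Real.exp 1 - 1) * u := by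
  have := convexOn_exp.2 (Set.mem_univ (0:ℝ)) (Set.mem_univ (1:ℝ))
    (by linarith : (0:ℝ) ≤ 1 - u) h0 (by ring)
  simp only [smul_eq_mul, mul_zero, mul_one, zero_add, Real.exp_zero] at this
  linarith

lemma row_tail (c₀ : ℝ) (hc₀ : 0 < c₀) (n : ℕ) (hn : 0 < n) (μ : ℝ) (hμ0 : 0 < μ)
    (s : ℝ) (hs0 : 0 < s) (hs1 : s ≤ 1) (hs : c₀ ^ 2 * μ ^ 2 / (8 * (n : ℝ)) ≤ s)
    (x : Fin n → ℝ) (hx : lInfNorm x ≤ c₀ * (Real.sqrt n)⁻¹ * l2Norm x)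
    (hL : 0 < l2Norm x) :
    (Measure.pi fun _ : Fin n => sparseGaussianLaw s)
      {a | μ * l2Norm x ≤ ∑ j, a j * x j}
      ≤ ENNReal.ofReal (Real.exp (-(μ ^ 2 / 4))) := by
  haveI := sparse_isProb hs0 hs1
  set ρ := (Measure.pi fun _ : Fin n => sparseGaussianLaw s) with hρ
  haveI : IsProbabilityMeasure ρ := by rw [hρ]; infer_instance
  set L := l2Norm x with hLdef
  set t := μ / (2 * L) with htdef
  have ht : 0 ≤ t := by positivity
  have hXexp : ∀ a : Fin n → ℝ,
      Real.exp (t * ∑ j, a j * x j) = ∏ j, Real.exp (t * x j * a j) := by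
    intro a
    rw [Finset.mul_sum, Real.exp_sum]
    exact Finset.prod_congr rfl fun j _ => by ring_nf
  have h_int : Integrable (fun a : Fin n → ℝ => Real.exp (t * ∑ j, a j * x j)) ρ := by
    have : (fun a : Fin n → ℝ => Real.exp (t * ∑ j, a j * x j))
        = fun a => ∏ j, Real.exp (t * x j * a j) := funext hXexp
    rw [this, hρ]
    exact pi_prod_integrable _ _ fun j => integrable_exp_sparse hs0 _
  have hcher := measure_ge_le_exp_mul_mgf (X := fun a : Fin n → ℝ => ∑ j, a j * x j)
    (μ := ρ) (t := t) (μ * L) ht h_int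
  -- compute the mgf
  have hmgf : mgf (fun a : Fin n → ℝ => ∑ j, a j * x j) ρ t
      = ∏ j, ((1 - s) + s * Real.exp ((t * x j) ^ 2 / (2 * s))) := by
    rw [mgf]
    calc ∫ a, Real.exp (t * ∑ j, a j * x j) ∂ρ
        = ∫ a : Fin n → ℝ, ∏ j, Real.exp (t * x j * a j) ∂ρ := by
          congr 1; exact funext hXexp
      _ = ∏ j, ∫ z, Real.exp (t * x j * z) ∂(sparseGaussianLaw s) := by
          rw [hρ]; exact pi_prod_integral (sparseGaussianLaw s) fun j z => Real.exp (t * x j * z)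
      _ = ∏ j, ((1 - s) + s * Real.exp ((t * x j) ^ 2 / (2 * s))) :=
          Finset.prod_congr rfl fun j _ => integral_exp_sparse hs0 hs1 _
  -- bound on each coordinate exponent
  have hn' : (0:ℝ) < n := by exact_mod_cast hn
  have hxj : ∀ j, (x j) ^ 2 ≤ c₀ ^ 2 * L ^ 2 / n := by
    intro j
    have h1 : |x j| ≤ c₀ * (Real.sqrt n)⁻¹ * L := le_trans (abs_le_lInfNorm x j) hx
    have h2 : (x j) ^ 2 ≤ (c₀ * (Real.sqrt n)⁻¹ * L) ^ 2 := by
      rw [← sq_abs]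
      exact pow_le_pow_left₀ (abs_nonneg _) h1 2
    calc (x j) ^ 2 ≤ (c₀ * (Real.sqrt n)⁻¹ * L) ^ 2 := h2
      _ = c₀ ^ 2 * ((Real.sqrt n) ^ 2)⁻¹ * L ^ 2 := by ring
      _ = c₀ ^ 2 * L ^ 2 / n := by
          rw [Real.sq_sqrt hn'.le]; ring
  have hu1 : ∀ j, (t * x j) ^ 2 / (2 * s) ≤ 1 := by
    intro j
    have ht2 : t ^ 2 = μ ^ 2 / (4 * L ^ 2) := by
      rw [htdef]; field_simp; ring
    have h3 : (t * x j) ^ 2 ≤ μ ^ 2 / (4 * L ^ 2) * (c₀ ^ 2 * L ^ 2 / n) := by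
      rw [mul_pow, ht2]
      exact mul_le_mul_of_nonneg_left (hxj j) (by positivity)
    have h4 : μ ^ 2 / (4 * L ^ 2) * (c₀ ^ 2 * L ^ 2 / n) = c₀ ^ 2 * μ ^ 2 / (4 * n) := by
      field_simp
    have h5 : c₀ ^ 2 * μ ^ 2 ≤ 8 * n * s := by
      rw [div_le_iff₀ (by positivity)] at hs; linarith
    rw [div_le_one (by positivity)]
    calc (t * x j) ^ 2 ≤ c₀ ^ 2 * μ ^ 2 / (4 * n) := by rw [← h4]; exact h3
      _ ≤ 8 * n * s / (4 * n) := by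
          apply div_le_div_of_nonneg_right h5 (by positivity) |>.trans_eq rfl
      _ = 2 * s := by field_simp; ring
  have hu0 : ∀ j, 0 ≤ (t * x j) ^ 2 / (2 * s) := fun j => by positivity
  -- bound the product
  have hfac : ∀ j : Fin n, (1 - s) + s * Real.exp ((t * x j) ^ 2 / (2 * s))
      ≤ Real.exp ((Real.exp 1 - 1) * s * ((t * x j) ^ 2 / (2 * s))) := by
    intro j
    set u := (t * x j) ^ 2 / (2 * s) with hu
    have h1 : Real.exp u ≤ 1 + (Real.exp 1 - 1) * u := exp_le_one_add (hu0 j) (hu1 j)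
    have h2 : (1 - s) + s * Real.exp u ≤ 1 + (Real.exp 1 - 1) * s * u := by
      nlinarith [hs0.le, (hu0 j)]
    exact h2.trans (by nlinarith [Real.add_one_le_exp ((Real.exp 1 - 1) * s * u)])
  have hfac0 : ∀ j : Fin n, 0 ≤ (1 - s) + s * Real.exp ((t * x j) ^ 2 / (2 * s)) := by
    intro j
    have := Real.exp_pos ((t * x j) ^ 2 / (2 * s))
    nlinarith
  have hsum : ∑ j, (Real.exp 1 - 1) * s * ((t * x j) ^ 2 / (2 * s))
      = (Real.exp 1 - 1) * μ ^ 2 / 8 := by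
    have h1 : ∀ j : Fin n, (Real.exp 1 - 1) * s * ((t * x j) ^ 2 / (2 * s))
        = ((Real.exp 1 - 1) * t ^ 2 / 2) * (x j) ^ 2 := by
      intro j; field_simp
    rw [Finset.sum_congr rfl fun j _ => h1 j, ← Finset.mul_sum, ← l2Norm_sq, ← hLdef]
    have ht2 : t ^ 2 * L ^ 2 = μ ^ 2 / 4 := by
      rw [htdef]; field_simp; ring
    linear_combination (Real.exp 1 - 1) / 2 * ht2
  have hprod : ∏ j, ((1 - s) + s * Real.exp ((t * x j) ^ 2 / (2 * s)))
      ≤ Real.exp ((Real.exp 1 - 1) * μ ^ 2 / 8) := by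
    calc ∏ j, ((1 - s) + s * Real.exp ((t * x j) ^ 2 / (2 * s)))
        ≤ ∏ j, Real.exp ((Real.exp 1 - 1) * s * ((t * x j) ^ 2 / (2 * s))) :=
          Finset.prod_le_prod (fun j _ => hfac0 j) (fun j _ => hfac j)
      _ = Real.exp (∑ j, (Real.exp 1 - 1) * s * ((t * x j) ^ 2 / (2 * s))) :=
          (Real.exp_sum _ _).symm
      _ = Real.exp ((Real.exp 1 - 1) * μ ^ 2 / 8) := by rw [hsum]
  -- final bound
  have hfin : Real.exp (-t * (μ * L)) * mgf (fun a : Fin n → ℝ => ∑ j, a j * x j) ρ t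
      ≤ Real.exp (-(μ ^ 2 / 4)) := by
    rw [hmgf]
    have harg : -t * (μ * L) = -(μ ^ 2 / 2) := by
      rw [htdef]; field_simp
    calc Real.exp (-t * (μ * L)) * ∏ j, ((1 - s) + s * Real.exp ((t * x j) ^ 2 / (2 * s)))
        ≤ Real.exp (-(μ ^ 2 / 2)) * Real.exp ((Real.exp 1 - 1) * μ ^ 2 / 8) := by
          rw [harg]
          exact mul_le_mul_of_nonneg_left hprod (Real.exp_pos _).le
      _ = Real.exp (-(μ ^ 2 / 2) + (Real.exp 1 - 1) * μ ^ 2 / 8) := (Real.exp_add _ _).symm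
      _ ≤ Real.exp (-(μ ^ 2 / 4)) := by
          apply Real.exp_le_exp.mpr
          nlinarith [Real.exp_one_lt_d9.le, sq_nonneg μ]
  rw [← ENNReal.ofReal_toReal (measure_ne_top ρ _)]
  exact ENNReal.ofReal_le_ofReal (hcher.trans hfin)



end Aux

/-- ℓ^∞ concentration for a sparse Gaussian matrix applied to a
well-spread vector. -/
theorem sparse_gaussian_linf_concentration (c₀ : ℝ) (hc₀ : 0 < c₀) (n m : ℕ)
    (hn : 0 < n) (hm : 0 < m) (β μ : ℝ) (hβ : 0 < β) (hμ0 : 0 < μ)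
    (hμ : 2 * Real.sqrt (β + Real.log (2 * (m : ℝ))) ≤ μ)
    (s : ℝ) (hs0 : 0 < s) (hs1 : s ≤ 1) (hs : c₀ ^ 2 * μ ^ 2 / (8 * (n : ℝ)) ≤ s)
    (Ω : Type) [MeasurableSpace Ω] (P : Measure Ω) [IsProbabilityMeasure P]
    (A : Ω → Fin m → Fin n → ℝ) (hA : Measurable A)
    (hlaw : P.map A = sparseGaussianMatrixLaw m n s) :
    ∀ x : Fin n → ℝ, lInfNorm x ≤ c₀ * (Real.sqrt n)⁻¹ * l2Norm x →
      ENNReal.ofReal (1 - Real.exp (-β)) ≤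
        P {ω | lInfNorm (matVec (A ω) x) ≤ μ * l2Norm x} := by
  intro x hx
  haveI : Nonempty (Fin m) := ⟨⟨0, hm⟩⟩
  haveI := sparse_isProb hs0 hs1
  have hofle1 : ENNReal.ofReal (1 - Real.exp (-β)) ≤ 1 := by
    apply ENNReal.ofReal_le_one.mpr
    have := Real.exp_pos (-β)
    linarith
  by_cases hL0 : l2Norm x = 0
  · -- x = 0 : the event is everything
    have hx0 : ∀ j, x j = 0 := by
      intro j
      have hsum : ∑ i, (x i) ^ 2 = 0 := by
        have := l2Norm_sq x
        rw [hL0] at this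
        simpa using this.symm
      have := (Finset.sum_eq_zero_iff_of_nonneg (fun i _ => sq_nonneg (x i))).mp hsum
        j (Finset.mem_univ j)
      exact pow_eq_zero_iff two_ne_zero |>.mp this
    have hset : {ω | lInfNorm (matVec (A ω) x) ≤ μ * l2Norm x} = Set.univ := by
      ext ω
      simp only [Set.mem_setOf_eq, Set.mem_univ, iff_true]
      have h1 : matVec (A ω) x = fun _ => 0 := by
        funext i
        simp only [matVec]
        exact Finset.sum_eq_zero fun j _ => by rw [hx0 j, mul_zero]
      rw [h1, hL0, mul_zero]
      unfold lInfNorm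
      simp
    rw [hset, measure_univ]
    exact hofle1
  · have hL : 0 < l2Norm x := lt_of_le_of_ne (l2Norm_nonneg x) (Ne.symm hL0)
    set L := l2Norm x with hLdef
    set ρn := (Measure.pi fun _ : Fin n => sparseGaussianLaw s) with hρn
    haveI : IsProbabilityMeasure ρn := by rw [hρn]; infer_instance
    set ν := sparseGaussianMatrixLaw m n s with hν
    haveI : IsProbabilityMeasure ν := by
      rw [hν, sparseGaussianMatrixLaw]; infer_instance
    -- the two tail sets per row
    set Tp := {a : Fin n → ℝ | μ * L ≤ ∑ j, a j * x j} with hTp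
    set Tm := {a : Fin n → ℝ | μ * L ≤ ∑ j, a j * (-x j)} with hTm
    have hmeas_sum : ∀ y : Fin n → ℝ, Measurable fun a : Fin n → ℝ => ∑ j, a j * y j :=
      fun y => Finset.measurable_sum _ fun j _ => (measurable_pi_apply j).mul_const _
    have hTp_meas : MeasurableSet Tp := measurableSet_le measurable_const (hmeas_sum x)
    have hTm_meas : MeasurableSet Tm :=
      measurableSet_le measurable_const (hmeas_sum fun j => -x j)
    -- the good set
    set S := {M : Fin m → Fin n → ℝ | ∀ i, |∑ j, M i j * x j| ≤ μ * L} with hSdef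
    have hmeas_row : ∀ i : Fin m, Measurable fun M : Fin m → Fin n → ℝ => ∑ j, M i j * x j :=
      fun i => Finset.measurable_sum _ fun j _ =>
        ((measurable_pi_apply j).comp (measurable_pi_apply i)).mul_const _
    have hS_meas : MeasurableSet S := by
      rw [hSdef, Set.setOf_forall]
      exact MeasurableSet.iInter fun i =>
        measurableSet_le (hmeas_row i).abs measurable_const
    have hPS : P {ω | lInfNorm (matVec (A ω) x) ≤ μ * L} = ν S := by
      have h1 : {ω | lInfNorm (matVec (A ω) x) ≤ μ * L} = A ⁻¹' S := by
        ext ω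
        simp only [Set.mem_setOf_eq, Set.mem_preimage, hSdef]
        exact lInfNorm_le_iff hm (matVec (A ω) x) (μ * L)
      rw [h1, ← Measure.map_apply hA hS_meas, hlaw]
    rw [hPS]
    -- complement is contained in a union of tail events
    have hsub : Sᶜ ⊆ ⋃ i : Fin m,
        (Function.eval i ⁻¹' Tp ∪ Function.eval i ⁻¹' Tm) := by
      intro M hM
      simp only [hSdef, Set.mem_compl_iff, Set.mem_setOf_eq, not_forall, not_le] at hM
      obtain ⟨i, hi⟩ := hM
      refine Set.mem_iUnion.mpr ⟨i, ?_⟩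
      rcases abs_cases (∑ j, M i j * x j) with ⟨he, _⟩ | ⟨he, _⟩
      · left
        simp only [Set.mem_preimage, hTp, Set.mem_setOf_eq, Function.eval]
        rw [he] at hi
        exact hi.le
      · right
        simp only [Set.mem_preimage, hTm, Set.mem_setOf_eq, Function.eval]
        rw [he] at hi
        calc μ * L ≤ -∑ j, M i j * x j := hi.le
          _ = ∑ j, M i j * (-x j) := by
              rw [← Finset.sum_neg_distrib]
              exact Finset.sum_congr rfl fun j _ => by ring
    -- each tail event has small probability
    have hEvalTp : ∀ (T : Set (Fin n → ℝ)), MeasurableSet T → ∀ i : Fin m,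
        ν (Function.eval i ⁻¹' T) = ρn T := by
      intro T hT i
      rw [hν, sparseGaussianMatrixLaw, ← hρn,
        ← Measure.map_apply (measurable_pi_apply i) hT, pi_map_eval]
    have hTpB : ρn Tp ≤ ENNReal.ofReal (Real.exp (-(μ ^ 2 / 4))) := by
      rw [hρn, hTp]
      exact row_tail c₀ hc₀ n hn μ hμ0 s hs0 hs1 hs x hx hL
    have hTmB : ρn Tm ≤ ENNReal.ofReal (Real.exp (-(μ ^ 2 / 4))) := by
      rw [hρn, hTm]
      have h1 := row_tail c₀ hc₀ n hn μ hμ0 s hs0 hs1 hs (fun j => -x j)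
        (by rw [lInfNorm_neg, l2Norm_neg]; exact hx)
        (by rw [l2Norm_neg]; exact hL)
      rw [l2Norm_neg] at h1
      exact h1
    -- union bound
    have hcompl : ν Sᶜ ≤ ENNReal.ofReal (Real.exp (-β)) := by
      calc ν Sᶜ ≤ ν (⋃ i : Fin m, (Function.eval i ⁻¹' Tp ∪ Function.eval i ⁻¹' Tm)) :=
            measure_mono hsub
        _ ≤ ∑' i : Fin m, ν (Function.eval i ⁻¹' Tp ∪ Function.eval i ⁻¹' Tm) :=
            measure_iUnion_le _
        _ = ∑ i : Fin m, ν (Function.eval i ⁻¹' Tp ∪ Function.eval i ⁻¹' Tm) :=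
            tsum_fintype _
        _ ≤ ∑ i : Fin m, (2 * ENNReal.ofReal (Real.exp (-(μ ^ 2 / 4)))) := by
            refine Finset.sum_le_sum fun i _ => ?_
            calc ν (Function.eval i ⁻¹' Tp ∪ Function.eval i ⁻¹' Tm)
                ≤ ν (Function.eval i ⁻¹' Tp) + ν (Function.eval i ⁻¹' Tm) :=
                  measure_union_le _ _
              _ ≤ ENNReal.ofReal (Real.exp (-(μ ^ 2 / 4)))
                    + ENNReal.ofReal (Real.exp (-(μ ^ 2 / 4))) := by
                  rw [hEvalTp Tp hTp_meas i, hEvalTp Tm hTm_meas i]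
                  exact add_le_add hTpB hTmB
              _ = 2 * ENNReal.ofReal (Real.exp (-(μ ^ 2 / 4))) := (two_mul _).symm
        _ = (m : ℝ≥0∞) * (2 * ENNReal.ofReal (Real.exp (-(μ ^ 2 / 4)))) := by
            rw [Finset.sum_const, Finset.card_univ, Fintype.card_fin, nsmul_eq_mul]
        _ ≤ ENNReal.ofReal (Real.exp (-β)) := by
            have hm' : (0:ℝ) < (m:ℝ) := by exact_mod_cast hm
            have h2m : (0:ℝ) < 2 * (m:ℝ) := by linarith
            have hlog : 0 ≤ Real.log (2 * (m:ℝ)) := by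
              apply Real.log_nonneg
              have : (1:ℝ) ≤ (m:ℝ) := by exact_mod_cast hm
              linarith
            have hc : 0 ≤ β + Real.log (2 * (m:ℝ)) := by linarith
            have hμ2 : 4 * (β + Real.log (2 * (m:ℝ))) ≤ μ ^ 2 := by
              nlinarith [Real.sq_sqrt hc, Real.sqrt_nonneg (β + Real.log (2 * (m:ℝ)))]
            have hreal : (m:ℝ) * (2 * Real.exp (-(μ ^ 2 / 4))) ≤ Real.exp (-β) := by
              have h1 : Real.exp (-(μ ^ 2 / 4)) ≤ Real.exp (-β - Real.log (2 * (m:ℝ))) := by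
                apply Real.exp_le_exp.mpr
                linarith
              calc (m:ℝ) * (2 * Real.exp (-(μ ^ 2 / 4)))
                  ≤ (m:ℝ) * (2 * Real.exp (-β - Real.log (2 * (m:ℝ)))) := by
                    apply mul_le_mul_of_nonneg_left _ hm'.le
                    exact mul_le_mul_of_nonneg_left h1 (by norm_num)
                _ = Real.exp (-β) := by
                    rw [Real.exp_sub, Real.exp_log h2m]
                    field_simp
            calc (m : ℝ≥0∞) * (2 * ENNReal.ofReal (Real.exp (-(μ ^ 2 / 4))))
                = ENNReal.ofReal ((m:ℝ) * (2 * Real.exp (-(μ ^ 2 / 4)))) := by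
                  rw [ENNReal.ofReal_mul hm'.le, ENNReal.ofReal_mul (by norm_num : (0:ℝ) ≤ 2)]
                  congr 1
                  · exact (ENNReal.ofReal_natCast m).symm
                  · congr 1
                    norm_num
              _ ≤ ENNReal.ofReal (Real.exp (-β)) := ENNReal.ofReal_le_ofReal hreal
    -- conclude
    have hS1 : ν S = 1 - ν Sᶜ := by
      rw [prob_compl_eq_one_sub hS_meas, ENNReal.sub_sub_cancel ENNReal.one_ne_top prob_le_one]
    rw [hS1]
    calc ENNReal.ofReal (1 - Real.exp (-β))
        = 1 - ENNReal.ofReal (Real.exp (-β)) := by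
          rw [ENNReal.ofReal_sub _ (Real.exp_pos _).le, ENNReal.ofReal_one]
      _ ≤ 1 - ν Sᶜ := tsub_le_tsub_left hcompl 1
end
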